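/- arXiv:2403.17110 — 5 statements merged into one kernel-verified Lean document; each statement's English description precedes it below -/
import Mathlib

section
/- The number of parking functions of length n is (n+1)^(n-1). -/
/-- A parking function of length `n`: a sequence of positive integers whose weakly
increasing rearrangement `λ` (obtained via a permutation `σ`) satisfies `λ i ≤ i`
(1-indexed). -/
def IsParkingFunction (n : ℕ) (π : Fin n → ℕ) : Prop :=
  (∀ i, 1 ≤ π i) ∧ ∃ σ : Equiv.Perm (Fin n),
    Monotone (π ∘ σ) ∧ ∀ i : Fin n, π (σ i) ≤ (i : ℕ) + 1

namespace ParkingAux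
open Finset

theorem card_filter_comp_perm {n : ℕ} (σ : Equiv.Perm (Fin n)) (p : Fin n → Prop) [DecidablePred p] :
    (univ.filter fun i => p (σ i)).card = (univ.filter p).card := by
  apply Finset.card_bij' (fun a _ => σ a) (fun b _ => σ.symm b) <;> simp
theorem card_filter_val_lt (n k : ℕ) (hk : k ≤ n) :
    (univ.filter fun j : Fin n => (j:ℕ) < k).card = k := by
  rcases lt_or_eq_of_le hk with h | rfl
  · have : (univ.filter fun j : Fin n => (j:ℕ) < k) = Finset.Iio (⟨k, h⟩ : Fin n) := by
      ext j; simp [Fin.lt_def]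
    rw [this, Fin.card_Iio]
  · rw [filter_true_of_mem (fun j _ => j.isLt), card_univ, Fintype.card_fin]

theorem mono_bound_iff {n : ℕ} {μ : Fin n → ℕ} (hμ : Monotone μ) :
    (∀ i : Fin n, μ i ≤ (i:ℕ)+1) ↔
    ∀ k, 1 ≤ k → k ≤ n → k ≤ (univ.filter fun i => μ i ≤ k).card := by
  constructor
  · intro h k _ hkn
    calc k = (univ.filter fun j : Fin n => (j:ℕ) < k).card := (card_filter_val_lt n k hkn).symm
    _ ≤ (univ.filter fun i => μ i ≤ k).card := by
        apply card_le_card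
        apply monotone_filter_right
        intro j _ hj
        exact le_trans (h j) hj
  · intro h i
    by_contra hc
    push_neg at hc
    have hkn : (i:ℕ) + 1 ≤ n := i.isLt
    have h1 := h ((i:ℕ)+1) (Nat.le_add_left 1 _) hkn
    have hsub : (univ.filter fun j => μ j ≤ (i:ℕ)+1) ⊆ (univ.filter fun j : Fin n => (j:ℕ) < (i:ℕ)) := by
      apply monotone_filter_right
      intro j _ hj
      by_contra hji
      push_neg at hji
      have : μ i ≤ μ j := hμ (by exact_mod_cast hji : i ≤ j)
      omega
    have h2 := card_le_card hsub
    rw [card_filter_val_lt n i (le_of_lt i.isLt)] at h2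
    omega

theorem isParkingFunction_iff {n : ℕ} (π : Fin n → ℕ) :
    IsParkingFunction n π ↔ (∀ i, 1 ≤ π i) ∧
      ∀ k, 1 ≤ k → k ≤ n → k ≤ (univ.filter fun i => π i ≤ k).card := by
  constructor
  · rintro ⟨h1, σ, hmono, hbd⟩
    refine ⟨h1, fun k hk1 hkn => ?_⟩
    have := (mono_bound_iff hmono).mp hbd k hk1 hkn
    simp only [Function.comp_apply] at this
    rwa [card_filter_comp_perm σ (fun i => π i ≤ k)] at this
  · rintro ⟨h1, hcnt⟩
    refine ⟨h1, Tuple.sort π, Tuple.monotone_sort π, ?_⟩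
    apply (mono_bound_iff (Tuple.monotone_sort π)).mpr
    intro k hk1 hkn
    have := hcnt k hk1 hkn
    rw [← card_filter_comp_perm (Tuple.sort π) (fun i => π i ≤ k)] at this
    simpa only [Function.comp_apply] using this

theorem value_le {n : ℕ} {π : Fin n → ℕ} (hπ : IsParkingFunction n π) (i : Fin n) : π i ≤ n := by
  obtain ⟨h1, hcnt⟩ := (isParkingFunction_iff π).mp hπ
  have hn : 1 ≤ n := i.pos
  have h := hcnt n hn le_rfl
  have hcardle : (univ.filter fun j => π j ≤ n).card ≤ n := by
    refine le_trans (card_filter_le _ _) ?_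
    simp
  have huniv : (univ.filter fun j => π j ≤ n) = univ :=
    Finset.eq_univ_of_card _ (by rw [Fintype.card_fin]; omega)
  have hi : i ∈ univ.filter fun j => π j ≤ n := huniv.symm ▸ mem_univ i
  exact (mem_filter.mp hi).2

variable {n : ℕ}

/-- number of occurrences of value `v` -/
def tt (f : Fin n → ZMod (n+1)) (v : ZMod (n+1)) : ℕ :=
  (univ.filter fun i => f i = v).card

/-- occurrence counts unrolled over ℕ, periodically -/
def TT (f : Fin n → ZMod (n+1)) (j : ℕ) : ℕ := tt f (j : ZMod (n+1))

/-- shifted prefix sums -/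
def SS (f : Fin n → ZMod (n+1)) (j : ℕ) : ℤ :=
  (∑ i ∈ range j, (TT f i : ℤ)) - j

theorem sum_zmod_eq_range (t : ZMod (n+1) → ℕ) :
    ∑ v : ZMod (n+1), t v = ∑ j ∈ range (n+1), t (j : ZMod (n+1)) := by
  apply Finset.sum_nbij' (fun v => ZMod.val v) (fun j => ((j : ℕ) : ZMod (n+1))) <;>
    simp +contextual [ZMod.natCast_val, ZMod.cast_id, ZMod.val_cast_of_lt, ZMod.val_lt, fun a : ZMod (n+1) => Nat.lt_succ_iff.mp (ZMod.val_lt a)]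

theorem sum_tt (f : Fin n → ZMod (n+1)) : ∑ v : ZMod (n+1), tt f v = n := by
  have h := Finset.card_eq_sum_card_fiberwise
    (f := f) (s := univ) (t := univ) (fun x _ => mem_univ _)
  simpa [tt] using h.symm

theorem TT_per (f : Fin n → ZMod (n+1)) (j : ℕ) : TT f (j + (n+1)) = TT f j := by
  have : ((j + (n+1) : ℕ) : ZMod (n+1)) = (j : ZMod (n+1)) := by
    push_cast
    simp [ZMod.natCast_self]
  simp [TT, this]

theorem sum_TT_range (f : Fin n → ZMod (n+1)) : ∑ i ∈ range (n+1), TT f i = n := by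
  simp only [TT]
  rw [← sum_zmod_eq_range]; exact sum_tt f

theorem sum_TT_Ico (f : Fin n → ZMod (n+1)) (a : ℕ) :
    ∑ i ∈ Finset.Ico a (a + (n+1)), TT f i = n := by
  induction a with
  | zero => rw [Nat.zero_add, ← Finset.range_eq_Ico]; exact sum_TT_range f
  | succ a ih =>
    have h1 : ∑ i ∈ Finset.Ico a (a + (n+1) + 1), TT f i
        = (∑ i ∈ Finset.Ico a (a + (n+1)), TT f i) + TT f (a + (n+1)) :=
      Finset.sum_Ico_succ_top (by omega) _
    have h2 : ∑ i ∈ Finset.Ico a (a + (n+1) + 1), TT f i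
        = TT f a + ∑ i ∈ Finset.Ico (a+1) (a + (n+1) + 1), TT f i :=
      Finset.sum_eq_sum_Ico_succ_bot (by omega) _
    have h3 : a + (n+1) + 1 = (a+1) + (n+1) := by omega
    rw [h3] at h1 h2
    rw [TT_per] at h1
    omega

theorem SS_per (f : Fin n → ZMod (n+1)) (j : ℕ) : SS f (j + (n+1)) = SS f j - 1 := by
  have hsplit : (∑ i ∈ range j, (TT f i : ℤ)) + ∑ i ∈ Finset.Ico j (j + (n+1)), (TT f i : ℤ)
      = ∑ i ∈ range (j + (n+1)), (TT f i : ℤ) := by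
    simp only [Finset.range_eq_Ico]
    exact Finset.sum_Ico_consecutive _ (by omega) (by omega)
  have hIco : ∑ i ∈ Finset.Ico j (j + (n+1)), (TT f i : ℤ) = (n : ℤ) := by
    rw [← Nat.cast_sum, sum_TT_Ico f j]
  simp only [SS]
  push_cast
  omega

/-- the "good window" condition -/
def WW (f : Fin n → ZMod (n+1)) (a : ℕ) : Prop :=
  ∀ j, a < j → j ≤ a + n → SS f a ≤ SS f j

theorem WW_add (f : Fin n → ZMod (n+1)) (a : ℕ) : WW f (a + (n+1)) ↔ WW f a := by
  constructor
  · intro h j hj1 hj2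
    have := h (j + (n+1)) (by omega) (by omega)
    rw [SS_per, SS_per] at this
    omega
  · intro h j hj1 hj2
    obtain ⟨j', rfl⟩ : ∃ j', j = j' + (n+1) := ⟨j - (n+1), by omega⟩
    have := h j' (by omega) (by omega)
    rw [SS_per, SS_per]
    omega

theorem WW_exists (f : Fin n → ZMod (n+1)) : ∃ a, a < n + 1 ∧ WW f a := by
  have hex : ∃ a, a < 2*(n+1) ∧ ∀ b < 2*(n+1), SS f a ≤ SS f b := by
    obtain ⟨a, ha, hmin⟩ := Finset.exists_min_image (range (2*(n+1))) (SS f)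
      ⟨0, by simp⟩
    exact ⟨a, by simpa using ha, fun b hb => hmin b (by simpa using hb)⟩
  classical
  obtain ⟨ha₀, hmin⟩ := Nat.find_spec hex
  have hW : WW f (Nat.find hex) := by
    intro j hj1 hj2
    by_cases hcase : j < 2*(n+1)
    · exact hmin j hcase
    · obtain ⟨j', rfl⟩ : ∃ j', j = j' + (n+1) := ⟨j - (n+1), by omega⟩
      have hj'lt : j' < 2*(n+1) := by omega
      have hj'a : j' < Nat.find hex := by omega
      have hnot := Nat.find_min hex hj'a
      push_neg at hnot
      obtain ⟨b, hb, hbl⟩ := hnot hj'lt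
      have h1 := hmin b hb
      rw [SS_per f j']
      omega
  by_cases hlt : Nat.find hex < n + 1
  · exact ⟨_, hlt, hW⟩
  · obtain ⟨a', ha'⟩ : ∃ a', Nat.find hex = a' + (n+1) := ⟨Nat.find hex - (n+1), by omega⟩
    rw [ha'] at hW
    exact ⟨a', by omega, (WW_add f a').mp hW⟩

theorem WW_unique (f : Fin n → ZMod (n+1)) {a b : ℕ} (ha : a < n+1) (hb : b < n+1)
    (hWa : WW f a) (hWb : WW f b) : a = b := by
  by_contra hne
  wlog hab : a < b generalizing a b
  · exact this hb ha hWb hWa (Ne.symm hne) (by omega)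
  have h1 : SS f a ≤ SS f b := hWa b hab (by omega)
  have h2 : SS f b ≤ SS f (a + (n+1)) := hWb (a + (n+1)) (by omega) (by omega)
  have h3 := SS_per f a
  omega

/-- `Park g`: the 0-indexed parking condition over `ZMod (n+1)` -/
def Park (g : Fin n → ZMod (n+1)) : Prop :=
  ∀ k, k < n → k + 1 ≤ (univ.filter fun i => (g i).val ≤ k).card

theorem count_eq (f : Fin n → ZMod (n+1)) (c : ZMod (n+1)) (k : ℕ) (hk : k < n) :
    ((univ.filter fun i => ((f i + c)).val ≤ k).card : ℤ)
      = SS f ((-c).val + (k + 1)) - SS f ((-c).val) + (k + 1) := by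
  set a₀ := (-c).val with ha₀
  have ha : (univ.filter fun i => ((f i + c)).val ≤ k).card
      = ∑ j ∈ range (k+1), tt f ((j : ZMod (n+1)) - c) := by
    rw [Finset.card_eq_sum_card_fiberwise
      (f := fun i => (f i + c).val) (s := univ.filter fun i => ((f i + c)).val ≤ k)
      (t := range (k+1)) (fun x hx => by simp at hx ⊢; omega)]
    apply Finset.sum_congr rfl
    intro j hj
    simp only [mem_range] at hj
    congr 1
    ext i
    simp only [mem_filter, mem_univ, true_and, Finset.filter_filter, tt]
    constructor
    · rintro ⟨h1, h2⟩
      have h3 : f i + c = (j : ZMod (n+1)) := by rw [← h2, ZMod.natCast_val, ZMod.cast_id]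
      rw [eq_sub_iff_add_eq]
      exact h3
    · intro h
      have h3 : f i + c = (j : ZMod (n+1)) := by rw [eq_sub_iff_add_eq] at h; exact h
      have h4 : (f i + c).val = j := by rw [h3]; exact ZMod.val_cast_of_lt (by omega)
      exact ⟨by omega, h4⟩
  have hb : ∀ j : ℕ, ((j : ZMod (n+1)) - c) = ((a₀ + j : ℕ) : ZMod (n+1)) := by
    intro j
    rw [ha₀]
    push_cast [ZMod.natCast_val, ZMod.cast_id]
    ring
  have hc : (∑ j ∈ range (k+1), (TT f (a₀ + j) : ℤ)) = SS f (a₀ + (k+1)) - SS f a₀ + (k + 1) := by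
    have hsplit : (∑ i ∈ range a₀, (TT f i : ℤ)) + ∑ i ∈ Finset.Ico a₀ (a₀ + (k+1)), (TT f i : ℤ)
        = ∑ i ∈ range (a₀ + (k+1)), (TT f i : ℤ) := by
      simp only [Finset.range_eq_Ico]
      exact Finset.sum_Ico_consecutive _ (by omega) (by omega)
    have hre : ∑ i ∈ Finset.Ico a₀ (a₀ + (k+1)), (TT f i : ℤ)
        = ∑ j ∈ range (k+1), (TT f (a₀ + j) : ℤ) := by
      rw [Finset.sum_Ico_eq_sum_range]
      simp
    simp only [SS]
    push_cast
    omega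
  calc ((univ.filter fun i => ((f i + c)).val ≤ k).card : ℤ)
      = ((∑ j ∈ range (k+1), tt f ((j : ZMod (n+1)) - c) : ℕ) : ℤ) := by exact_mod_cast Nat.cast_inj.mpr ha
    _ = ∑ j ∈ range (k+1), (TT f (a₀ + j) : ℤ) := by
        push_cast
        apply Finset.sum_congr rfl
        intro j _
        rw [hb j]
        rfl
    _ = SS f (a₀ + (k+1)) - SS f a₀ + (k + 1) := hc

theorem park_iff (f : Fin n → ZMod (n+1)) (c : ZMod (n+1)) :
    Park (fun i => f i + c) ↔ WW f ((-c).val) := by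
  constructor
  · intro hp j hj1 hj2
    obtain ⟨k, rfl⟩ : ∃ k, j = (-c).val + (k + 1) := ⟨j - (-c).val - 1, by omega⟩
    have hk : k < n := by omega
    have h1 := hp k hk
    have h2 := count_eq f c k hk
    have h3 : ((k:ℤ) + 1) ≤ ((univ.filter fun i => ((f i + c)).val ≤ k).card : ℤ) := by
      exact_mod_cast h1
    omega
  · intro hw k hk
    have h2 := count_eq f c k hk
    have h3 := hw ((-c).val + (k + 1)) (by omega) (by omega)
    have : ((k:ℤ) + 1) ≤ ((univ.filter fun i => ((f i + c)).val ≤ k).card : ℤ) := by omega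
    exact_mod_cast this

theorem park_existsUnique (f : Fin n → ZMod (n+1)) :
    ∃! c : ZMod (n+1), Park (fun i => f i + c) := by
  obtain ⟨a, ha, hW⟩ := WW_exists f
  refine ⟨-(a : ZMod (n+1)), ?_, ?_⟩
  · show Park fun i => f i + -(a : ZMod (n+1))
    rw [park_iff]
    rwa [neg_neg, ZMod.val_cast_of_lt ha]
  · intro c hc
    rw [park_iff] at hc
    have h1 : (-c).val = a :=
      WW_unique f ((-c).val_lt) ha hc hW
    have h2 : -c = (a : ZMod (n+1)) := by rw [← h1, ZMod.natCast_val, ZMod.cast_id]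
    rw [← h2, neg_neg]

theorem nat_card_park (n : ℕ) :
    Nat.card {g : Fin n → ZMod (n+1) // Park g} = (n+1)^(n-1) := by
  have hbij : Function.Bijective
      (fun p : {g : Fin n → ZMod (n+1) // Park g} × ZMod (n+1) =>
        (fun i => p.1.1 i + p.2 : Fin n → ZMod (n+1))) := by
    constructor
    · rintro ⟨⟨g₁, hg₁⟩, c₁⟩ ⟨⟨g₂, hg₂⟩, c₂⟩ h
      simp only at h
      set F : Fin n → ZMod (n+1) := fun i => g₁ i + c₁ with hF
      have e1 : g₁ = fun i => F i + (-c₁) := by funext i; simp [hF]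
      have e2 : g₂ = fun i => F i + (-c₂) := by
        funext i
        have : F i = g₂ i + c₂ := by rw [h]
        rw [this]; ring
      have hp1 : Park (fun i => F i + (-c₁)) := by rwa [← e1]
      have hp2 : Park (fun i => F i + (-c₂)) := by rwa [← e2]
      have hcc : (-c₁ : ZMod (n+1)) = -c₂ :=
        (park_existsUnique F).unique hp1 hp2
      have hc : c₁ = c₂ := by
        have := congrArg Neg.neg hcc
        simpa using this
      subst hc
      have hg : g₁ = g₂ := by
        funext i
        have h1 := congrFun e1 i
        have h2 := congrFun h i
        rw [h2] at h1
        simpa using h1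
      simp [hg]
    · intro F
      obtain ⟨c, hc, -⟩ := park_existsUnique F
      refine ⟨⟨⟨fun i => F i + c, hc⟩, -c⟩, ?_⟩
      funext i
      simp
  have hcard := Nat.card_congr (Equiv.ofBijective _ hbij)
  rw [Nat.card_prod, Nat.card_zmod] at hcard
  have hfun : Nat.card (Fin n → ZMod (n+1)) = (n+1)^n := by
    rw [Nat.card_eq_fintype_card, Fintype.card_fun]
    simp [ZMod.card]
  rw [hfun] at hcard
  have hpow : (n+1)^n = (n+1)^(n-1) * (n+1) := by
    cases n with
    | zero => simp
    | succ k => rw [pow_succ]; simp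
  exact Nat.eq_of_mul_eq_mul_right (by omega) (hcard.trans (by rw [hpow]))


def pfEquiv (n : ℕ) :
    {π : Fin n → ℕ // IsParkingFunction n π} ≃ {g : Fin n → ZMod (n+1) // Park g} where
  toFun p := ⟨fun i => ((p.1 i - 1 : ℕ) : ZMod (n+1)), by
    obtain ⟨h1, hcnt⟩ := (isParkingFunction_iff p.1).mp p.2
    intro k hk
    have h := hcnt (k+1) (by omega) (by omega)
    have hset : (univ.filter fun i => (((p.1 i - 1 : ℕ) : ZMod (n+1))).val ≤ k)
        = univ.filter fun i => p.1 i ≤ k + 1 := by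
      apply Finset.filter_congr
      intro i _
      have hv : (((p.1 i - 1 : ℕ) : ZMod (n+1))).val = p.1 i - 1 :=
        ZMod.val_cast_of_lt (by have := value_le p.2 i; omega)
      rw [hv]
      have := h1 i
      constructor <;> intro <;> omega
    rw [hset]
    exact h⟩
  invFun q := ⟨fun i => (q.1 i).val + 1, by
    rw [isParkingFunction_iff]
    refine ⟨fun i => by omega, fun k hk1 hkn => ?_⟩
    have h := q.2 (k-1) (by omega)
    have hset : (univ.filter fun i => (q.1 i).val + 1 ≤ k)
        = univ.filter fun i => (q.1 i).val ≤ k - 1 := by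
      apply Finset.filter_congr
      intro i _
      constructor <;> intro <;> omega
    rw [hset]
    omega⟩
  left_inv p := Subtype.ext (funext fun i => by
    have h1 := ((isParkingFunction_iff p.1).mp p.2).1 i
    have hv : (((p.1 i - 1 : ℕ) : ZMod (n+1))).val = p.1 i - 1 :=
      ZMod.val_cast_of_lt (by have := value_le p.2 i; omega)
    simp only [hv]
    omega)
  right_inv q := Subtype.ext (funext fun i => by
    simp [ZMod.natCast_val, ZMod.cast_id])

end ParkingAux

theorem card_parkingFunctions (n : ℕ) :
    Set.ncard {π : Fin n → ℕ | IsParkingFunction n π} = (n + 1) ^ (n - 1) := by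
  rw [← Nat.card_coe_set_eq]
  exact (Nat.card_congr ((Equiv.subtypeEquivRight (fun π => Iff.rfl)).trans
    (ParkingAux.pfEquiv n))).trans (ParkingAux.nat_card_park n)
end

section
/- Let G be the group of n-tuples in {1,...,n+1}^n under componentwise addition modulo n+1, and let H be the cyclic subgroup generated by (1,1,...,1). Then every coset of H in G contains exactly one parking function of length n (identifying tuples with value n+1 never being a valid preference of a parking function, i.e., a coset representative is a parking function iff all its entries lie in {1,...,n} and it satisfies the parking condition). -/
/-- Interpret an element of `ZMod (n+1)` as a preference in `{1, …, n+1}`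
(the residue `0` corresponds to `n+1`). -/
def prefOfZMod (n : ℕ) (a : ZMod (n + 1)) : ℕ :=
  if a.val = 0 then n + 1 else a.val

namespace PollakAux

open Finset

variable (n : ℕ) (g : Fin n → ZMod (n + 1))

/-- number of cars whose (shifted) preference hits residue `-j`. -/
def m (j : ℕ) : ℕ := #(univ.filter fun i : Fin n => g i = -((j : ℕ) : ZMod (n + 1)))

/-- prefix-sum "height" function for the cycle lemma. -/
def f (u : ℕ) : ℤ := (u : ℤ) - ∑ j ∈ range u, (m n g j : ℤ)

lemma natCast_val_self (a : ZMod (n + 1)) : ((a.val : ℕ) : ZMod (n + 1)) = a := by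
  rw [ZMod.natCast_val, ZMod.cast_id]

lemma period_sum (u : ℕ) : ∑ j ∈ range (n + 1), m n g (u + j) = n := by
  have h := Finset.card_eq_sum_card_fiberwise
    (f := fun i : Fin n => (-(g i) - (u : ZMod (n + 1))).val)
    (s := univ) (t := range (n + 1))
    (fun i _ => mem_range.mpr (ZMod.val_lt _))
  simp only [card_univ, Fintype.card_fin] at h
  refine Eq.trans ?_ h.symm
  refine Finset.sum_congr rfl fun j hj => ?_
  rw [mem_range] at hj
  unfold m
  congr 1
  refine Finset.filter_congr fun i _ => ?_
  constructor
  · intro hv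
    have hx : -(g i) - (u : ZMod (n+1)) = (j : ZMod (n+1)) := by
      rw [hv]; push_cast; ring
    show (-(g i) - (u : ZMod (n+1))).val = j
    rw [hx, ZMod.val_natCast, Nat.mod_eq_of_lt hj]
  · intro hv
    have hv' : (-(g i) - (u : ZMod (n+1))).val = j := hv
    have h2 : ((((-(g i) - (u : ZMod (n+1))).val : ℕ)) : ZMod (n+1)) = -(g i) - u :=
      natCast_val_self n _
    rw [hv'] at h2
    push_cast
    push_cast at h2
    linear_combination h2

lemma sum_split (u p : ℕ) :
    ∑ j ∈ range (u + p), (m n g j : ℤ) =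
      ∑ j ∈ range u, (m n g j : ℤ) + ∑ j ∈ range p, (m n g (u + j) : ℤ) := by
  have h1 := Finset.sum_Ico_consecutive (fun j => (m n g j : ℤ))
    (Nat.zero_le u) (Nat.le_add_right u p)
  rw [← Finset.range_eq_Ico] at h1
  rw [Finset.sum_Ico_eq_sum_range] at h1
  simp only [Nat.add_sub_cancel_left] at h1
  rw [← Finset.range_eq_Ico] at h1
  linarith [h1]

lemma f_add (u : ℕ) : f n g (u + (n + 1)) = f n g u + 1 := by
  unfold f
  rw [sum_split]
  have hp : ∑ j ∈ range (n + 1), (m n g (u + j) : ℤ) = (n : ℤ) := by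
    rw [← Nat.cast_sum]
    exact_mod_cast congrArg (Nat.cast : ℕ → ℤ) (period_sum n g u)
  rw [hp]
  push_cast
  ring

/-- count of cars whose shifted-by-`k` preference lies in the last `t+1` circular spots. -/
def A (k t : ℕ) : ℕ :=
  #(univ.filter fun i : Fin n => ((g i + (k : ZMod (n+1))) + (t : ZMod (n+1))).val ≤ t)

lemma A_eq (k t : ℕ) (ht : t ≤ n) : A n g k t = ∑ j ∈ range (t + 1), m n g (k + j) := by
  rw [← Finset.sum_range_reflect (fun j => m n g (k + j)) (t + 1)]
  unfold A
  have h := Finset.card_eq_sum_card_fiberwise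
    (f := fun i : Fin n => ((g i + (k : ZMod (n+1))) + (t : ZMod (n+1))).val)
    (s := univ.filter fun i : Fin n => ((g i + (k : ZMod (n+1))) + (t : ZMod (n+1))).val ≤ t)
    (t := range (t + 1))
    (fun i hi => mem_range.mpr (Nat.lt_succ_of_le (mem_filter.mp hi).2))
  rw [h]
  refine Finset.sum_congr rfl fun j hj => ?_
  rw [mem_range, Nat.lt_succ_iff] at hj
  rw [Finset.filter_filter]
  have hidx : t + 1 - 1 - j = t - j := by omega
  rw [hidx]
  unfold m
  congr 1
  refine Finset.filter_congr fun i _ => ?_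
  have hcast : ((k + (t - j) : ℕ) : ZMod (n+1)) = (k : ZMod (n+1)) + (t : ZMod (n+1)) - (j : ZMod (n+1)) := by
    have : (k + (t - j) : ℕ) = k + t - j := by omega
    rw [this, Nat.cast_sub (by omega)]
    push_cast
    ring
  constructor
  · rintro ⟨hle, hval⟩
    have hval' : ((g i + (k:ZMod (n+1))) + (t:ZMod (n+1))).val = j := hval
    have h2 : (((g i + (k:ZMod (n+1))) + (t:ZMod (n+1))).val : ZMod (n+1))
        = (g i + (k:ZMod (n+1))) + (t:ZMod (n+1)) := natCast_val_self n _
    rw [hval'] at h2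
    rw [hcast]
    linear_combination -h2
  · intro hv
    have hx : (g i + (k:ZMod (n+1))) + (t:ZMod (n+1)) = (j : ZMod (n+1)) := by
      rw [hv, hcast]; ring
    have : ((g i + (k:ZMod (n+1))) + (t:ZMod (n+1))).val = j := by
      rw [hx, ZMod.val_natCast, Nat.mod_eq_of_lt (by omega)]
    exact ⟨by omega, this⟩

lemma cond_iff (k t : ℕ) (ht : t ≤ n) :
    A n g k t ≤ t ↔ f n g k < f n g (k + t + 1) := by
  rw [A_eq n g k t ht]
  unfold f
  rw [show k + t + 1 = k + (t + 1) by ring, sum_split]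
  have hc : (∑ j ∈ range (t + 1), (m n g (k + j) : ℤ)) = ((∑ j ∈ range (t + 1), m n g (k + j) : ℕ) : ℤ) := by
    push_cast; ring
  rw [hc]
  push_cast
  omega

/-- The cycle lemma: there is a unique shift `k ∈ [0, n]` after which the height
function stays strictly above its starting value for a full period. -/
lemma cycle_lemma : ∃! k : ℕ, k ≤ n ∧ ∀ t ≤ n, f n g k < f n g (k + t + 1) := by
  obtain ⟨k0, hk0mem, hk0min⟩ :=
    Finset.exists_min_image (range (n + 1)) (f n g) ⟨0, mem_range.mpr (Nat.succ_pos n)⟩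
  set T := (range (n + 1)).filter (fun u => f n g u ≤ f n g k0) with hT
  have hTne : T.Nonempty := ⟨k0, mem_filter.mpr ⟨hk0mem, le_refl _⟩⟩
  set k := T.max' hTne with hk
  have hkT : k ∈ T := T.max'_mem hTne
  have hkmem : k ∈ range (n + 1) := (mem_filter.mp hkT).1
  have hkmin : ∀ v ∈ range (n + 1), f n g k ≤ f n g v := by
    intro v hv
    exact le_trans (mem_filter.mp hkT).2 (hk0min v hv)
  have hkle : k ≤ n := by rw [mem_range] at hkmem; omega
  have hgood : ∀ t ≤ n, f n g k < f n g (k + t + 1) := by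
    intro t ht
    rcases Nat.lt_or_ge (k + t + 1) (n + 1) with h | h
    · have hle := hkmin _ (mem_range.mpr h)
      rcases lt_or_eq_of_le hle with h' | h'
      · exact h'
      · exfalso
        have hmT : (k + t + 1) ∈ T := mem_filter.mpr ⟨mem_range.mpr h, by
          rw [← h']; exact (mem_filter.mp hkT).2⟩
        have := T.le_max' _ hmT
        omega
    · have heq : k + t + 1 = (k + t - n) + (n + 1) := by omega
      rw [heq, f_add]
      have hmem : k + t - n ∈ range (n + 1) := mem_range.mpr (by omega)
      have := hkmin _ hmem
      omega
  refine ⟨k, ⟨hkle, hgood⟩, ?_⟩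
  rintro k' ⟨hk'le, hk'good⟩
  by_contra hne
  have key : ∀ a b : ℕ, a < b → b ≤ n →
      (∀ t ≤ n, f n g a < f n g (a + t + 1)) →
      (∀ t ≤ n, f n g b < f n g (b + t + 1)) → False := by
    intro a b hab hbn hga hgb
    have h1 : f n g a < f n g b := by
      have := hga (b - a - 1) (by omega)
      rwa [show a + (b - a - 1) + 1 = b by omega] at this
    have h2 : f n g b < f n g a + 1 := by
      have := hgb (a + n - b) (by omega)
      rwa [show b + (a + n - b) + 1 = a + (n + 1) by omega, f_add] at this
    omega
  rcases Nat.lt_or_ge k' k with h | h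
  · exact key k' k h hkle hk'good hgood
  · exact key k k' (by omega) hk'le hgood hk'good

lemma pref_ge_iff (a : ZMod (n + 1)) (t : ℕ) (ht : t ≤ n) :
    (a + (t : ZMod (n + 1))).val ≤ t ↔ n + 1 - t ≤ prefOfZMod n a := by
  have hval : ((t : ZMod (n + 1))).val = t := ZMod.val_cast_of_lt (by omega)
  have hv : (a + (t : ZMod (n + 1))).val = (a.val + t) % (n + 1) := by
    rw [ZMod.val_add, hval]
  have ha : a.val < n + 1 := ZMod.val_lt a
  rw [hv, prefOfZMod]
  split_ifs with h0
  · rw [h0, Nat.zero_add, Nat.mod_eq_of_lt (by omega)]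
    omega
  · rcases Nat.lt_or_ge (a.val + t) (n + 1) with h | h
    · rw [Nat.mod_eq_of_lt h]; omega
    · rw [Nat.mod_eq_sub_mod h, Nat.mod_eq_of_lt (by omega)]; omega

lemma card_coe_ge (s : ℕ) :
    #(univ.filter fun i : Fin n => s ≤ (i : ℕ)) = n - s := by
  rw [← Nat.card_Ico s n]
  refine Finset.card_bij' (fun i _ => (i : ℕ)) (fun j hj => ⟨j, (mem_Ico.mp hj).2⟩)
    ?_ ?_ ?_ ?_
  · intro a ha
    rw [mem_Ico]
    exact ⟨(mem_filter.mp ha).2, a.isLt⟩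
  · intro j hj
    simp
    exact (mem_Ico.mp hj).1
  · intro a ha; simp
  · intro j hj; simp

lemma parking_iff (c : Fin n → ZMod (n + 1)) :
    IsParkingFunction n (fun i => prefOfZMod n (c i)) ↔
      ∀ t ≤ n, #(univ.filter fun i : Fin n => (c i + (t : ZMod (n+1))).val ≤ t) ≤ t := by
  set π : Fin n → ℕ := fun i => prefOfZMod n (c i) with hπ
  have hcount : ∀ t ≤ n,
      (univ.filter fun i : Fin n => (c i + (t : ZMod (n+1))).val ≤ t)
        = univ.filter fun i : Fin n => n + 1 - t ≤ π i := by
    intro t ht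
    exact Finset.filter_congr fun i _ => pref_ge_iff n (c i) t ht
  have hcardperm : ∀ (σ : Equiv.Perm (Fin n)) (s : ℕ),
      #(univ.filter fun i : Fin n => s ≤ π i) = #(univ.filter fun i : Fin n => s ≤ π (σ i)) := by
    intro σ s
    refine Finset.card_bij' (fun i _ => σ⁻¹ i) (fun i _ => σ i) ?_ ?_ ?_ ?_
    · intro a ha
      simp only [mem_filter, mem_univ, true_and] at ha ⊢
      simpa using ha
    · intro a ha
      simp only [mem_filter, mem_univ, true_and] at ha ⊢
      exact ha
    · intro a _; simp
    · intro a _; simp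
  constructor
  · rintro ⟨hpos, σ, hmono, hbd⟩ t ht
    rw [hcount t ht, hcardperm σ]
    have hsub : (univ.filter fun i : Fin n => n + 1 - t ≤ π (σ i))
        ⊆ univ.filter fun i : Fin n => n - t ≤ (i : ℕ) := by
      intro i hi
      rw [mem_filter] at hi ⊢
      refine ⟨mem_univ _, ?_⟩
      have := hbd i
      omega
    calc #(univ.filter fun i : Fin n => n + 1 - t ≤ π (σ i))
        ≤ #(univ.filter fun i : Fin n => n - t ≤ (i : ℕ)) := Finset.card_le_card hsub
      _ = n - (n - t) := card_coe_ge n (n - t)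
      _ ≤ t := by omega
  · intro hcond
    have hgen : ∀ s : ℕ, 1 ≤ s → #(univ.filter fun i : Fin n => s ≤ π i) ≤ n + 1 - s := by
      intro s hs
      rcases le_or_gt s (n + 1) with hsle | hsgt
      · have ht : n + 1 - s ≤ n := by omega
        have h1 := hcond (n + 1 - s) ht
        rw [hcount (n + 1 - s) ht] at h1
        have hss : n + 1 - (n + 1 - s) = s := by omega
        rw [hss] at h1
        exact h1
      · have : (univ.filter fun i : Fin n => s ≤ π i) = ∅ := by
          refine Finset.filter_false_of_mem fun i _ => ?_
          have : π i ≤ n + 1 := by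
            show prefOfZMod n (c i) ≤ n + 1
            unfold prefOfZMod
            split_ifs with h
            · omega
            · have := ZMod.val_lt (c i); omega
          omega
        rw [this]
        simp
    refine ⟨fun i => ?_, Tuple.sort π, Tuple.monotone_sort π, ?_⟩
    · show 1 ≤ prefOfZMod n (c i)
      unfold prefOfZMod
      split_ifs with h
      · omega
      · omega
    · by_contra hbad
      push_neg at hbad
      obtain ⟨i₀, hi₀⟩ := hbad
      have hi₀n : (i₀ : ℕ) < n := i₀.isLt
      have hub := hgen ((i₀ : ℕ) + 2) (by omega)
      rw [hcardperm (Tuple.sort π)] at hub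
      have hsub : (univ.filter fun i : Fin n => (i₀ : ℕ) ≤ (i : ℕ))
          ⊆ univ.filter fun i : Fin n => (i₀ : ℕ) + 2 ≤ π (Tuple.sort π i) := by
        intro j hj
        rw [mem_filter] at hj ⊢
        refine ⟨mem_univ _, ?_⟩
        have hle : i₀ ≤ j := by
          rw [Fin.le_def]; exact hj.2
        have := Tuple.monotone_sort π hle
        simp only [Function.comp_apply] at this
        omega
      have hlb := Finset.card_le_card hsub
      rw [card_coe_ge n (i₀ : ℕ)] at hlb
      omega

end PollakAux

open PollakAux Finset in
/-- Pollak's circle argument: in the group `G = (ZMod (n+1))^n` under componentwise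
addition, with `H` the cyclic subgroup generated by `(1,…,1)`, every coset of `H`
contains exactly one parking function. -/
theorem pollak_coset_unique_parkingFunction (n : ℕ) (g : Fin n → ZMod (n + 1)) :
    ∃! c : Fin n → ZMod (n + 1),
      c - g ∈ AddSubgroup.zmultiples (fun _ => (1 : ZMod (n + 1))) ∧
      IsParkingFunction n (fun i => prefOfZMod n (c i)) := by
  have hmem : ∀ c : Fin n → ZMod (n + 1),
      (c - g ∈ AddSubgroup.zmultiples (fun _ => (1 : ZMod (n + 1)))) ↔
      ∃ k : ℕ, k ≤ n ∧ c = fun i => g i + (k : ZMod (n + 1)) := by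
    intro c
    rw [AddSubgroup.mem_zmultiples_iff]
    constructor
    · rintro ⟨z, hz⟩
      refine ⟨((z : ZMod (n + 1))).val, Nat.lt_succ_iff.mp (ZMod.val_lt _), ?_⟩
      funext i
      have h1 := congrFun hz i
      simp only [Pi.smul_apply, Pi.sub_apply, zsmul_eq_mul, mul_one] at h1
      rw [natCast_val_self]
      push_cast at h1 ⊢
      linear_combination -h1
    · rintro ⟨k, -, rfl⟩
      refine ⟨(k : ℤ), ?_⟩
      funext i
      simp only [Pi.smul_apply, Pi.sub_apply, zsmul_eq_mul, mul_one]
      push_cast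
      ring
  have hpark : ∀ k : ℕ,
      (IsParkingFunction n (fun i => prefOfZMod n (g i + (k : ZMod (n+1))))) ↔
      ∀ t ≤ n, f n g k < f n g (k + t + 1) := by
    intro k
    rw [parking_iff]
    exact forall₂_congr fun t ht => cond_iff n g k t ht
  obtain ⟨k, ⟨hkle, hk⟩, huniq⟩ := cycle_lemma n g
  refine ⟨(fun i => g i + (k : ZMod (n + 1))), ⟨?_, ?_⟩, ?_⟩
  · exact (hmem _).mpr ⟨k, hkle, rfl⟩
  · exact (hpark k).mpr hk
  · rintro c ⟨hc1, hc2⟩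
    obtain ⟨k', hk'le, rfl⟩ := (hmem c).mp hc1
    have := (hpark k').mp hc2
    rw [huniq k' ⟨hk'le, this⟩]
end

section
/- Let 0 ≤ s ≤ n. The number of parking functions π of length n with π_1 < π_2 < ... < π_s is equal to C(n+1, s) · (n+1)^(n-s-1). -/
open Finset

lemma isPF_iff {n : ℕ} (π : Fin n → ℕ) :
    IsParkingFunction n π ↔ (∀ i, 1 ≤ π i) ∧
      ∀ k, k ≤ n → k ≤ (Finset.univ.filter (fun i => π i ≤ k)).card := by
  constructor
  · rintro ⟨h1, σ, hmono, hle⟩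
    refine ⟨h1, fun k hk => ?_⟩
    classical
    have hsub : (Finset.univ.filter (fun m : Fin n => (m : ℕ) < k)).image σ ⊆
        Finset.univ.filter (fun i => π i ≤ k) := by
      intro x hx
      simp only [mem_image, mem_filter, mem_univ, true_and] at hx ⊢
      obtain ⟨m, hm, rfl⟩ := hx
      calc π (σ m) ≤ (m : ℕ) + 1 := hle m
        _ ≤ k := hm
    have hcard : (Finset.univ.filter (fun m : Fin n => (m : ℕ) < k)).card = k := by
      rcases eq_or_lt_of_le hk with heq | hk'
      · have : (Finset.univ.filter (fun m : Fin n => (m : ℕ) < k)) = Finset.univ := by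
          apply Finset.filter_true_of_mem
          intro m _
          exact heq ▸ m.2
        rw [this, Finset.card_univ, Fintype.card_fin, heq]
      · have : (Finset.univ.filter (fun m : Fin n => (m : ℕ) < k)) = Finset.Iio ⟨k, hk'⟩ := by
          ext m; simp [Fin.lt_def]
        rw [this, Fin.card_Iio]
    calc k = (Finset.univ.filter (fun m : Fin n => (m : ℕ) < k)).card := hcard.symm
      _ = ((Finset.univ.filter (fun m : Fin n => (m : ℕ) < k)).image σ).card :=
        (Finset.card_image_of_injective _ σ.injective).symm
      _ ≤ _ := Finset.card_le_card hsub
  · rintro ⟨h1, hcnt⟩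
    refine ⟨h1, Tuple.sort π, Tuple.monotone_sort π, fun i => ?_⟩
    classical
    by_contra hcon
    push_neg at hcon
    set σ := Tuple.sort π
    have hmono := Tuple.monotone_sort π
    have hsub : Finset.univ.filter (fun j => π j ≤ (i : ℕ) + 1) ⊆
        (Finset.univ.filter (fun m : Fin n => m < i)).image σ := by
      intro x hx
      simp only [mem_filter, mem_univ, true_and, mem_image] at hx ⊢
      refine ⟨σ.symm x, ?_, σ.apply_symm_apply x⟩
      by_contra hge
      push_neg at hge
      have : π (σ i) ≤ π (σ (σ.symm x)) := hmono hge
      rw [σ.apply_symm_apply] at this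
      omega
    have h1' : (Finset.univ.filter (fun m : Fin n => m < i)).card = (i : ℕ) := by
      have : Finset.univ.filter (fun m : Fin n => m < i) = Finset.Iio i := by
        ext m; simp
      rw [this, Fin.card_Iio]
    have h2 := hcnt ((i : ℕ) + 1) i.2
    have h3 := Finset.card_le_card hsub
    rw [Finset.card_image_of_injective _ σ.injective, h1'] at h3
    omega

lemma sum_range_zmod (N : ℕ) [NeZero N] (g : ZMod N → ℤ) :
    ∑ j ∈ Finset.range N, g ((j : ℕ) : ZMod N) = ∑ x : ZMod N, g x := by
  refine Finset.sum_nbij' (fun j => ((j : ℕ) : ZMod N)) (fun x => x.val) ?_ ?_ ?_ ?_ ?_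
  · intro j _; exact Finset.mem_univ _
  · intro x _; exact Finset.mem_range.mpr (ZMod.val_lt x)
  · intro j hj; exact ZMod.val_cast_of_lt (Finset.mem_range.mp hj)
  · intro x _
    show ((ZMod.val x : ℕ) : ZMod N) = x
    rw [ZMod.natCast_val, ZMod.cast_id]
  · intro j _; rfl

def cycB (N : ℕ) (b : ZMod N → ℤ) (m : ℕ) : ℤ := ∑ j ∈ Finset.range m, b (j : ZMod N)

lemma cycle_lemma (N : ℕ) [NeZero N] (b : ZMod N → ℤ) (hb : ∑ j, b j = -1) :
    ∃! c : ZMod N, ∀ k, k < N → 0 ≤ ∑ j ∈ Finset.range k, b ((j : ZMod N) - c) := by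
  have hN : 0 < N := Nat.pos_of_ne_zero (NeZero.ne N)
  set B : ℕ → ℤ := cycB N b with hB
  have hshift : ∀ k₀ k : ℕ,
      ∑ j ∈ Finset.range k, b ((j : ZMod N) - (-(k₀ : ZMod N))) = B (k₀ + k) - B k₀ := by
    intro k₀ k
    have h1 : B (k₀ + k) - B k₀ = ∑ j ∈ Finset.Ico k₀ (k₀ + k), b (j : ZMod N) := by
      rw [hB]
      show cycB N b _ - cycB N b _ = _
      unfold cycB
      rw [Finset.sum_Ico_eq_sub _ (Nat.le_add_right k₀ k)]
    rw [h1, Finset.sum_Ico_eq_sum_range]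
    simp only [Nat.add_sub_cancel_left, sub_neg_eq_add]
    apply Finset.sum_congr rfl
    intro j _
    push_cast
    ring_nf
  have hper : ∀ m : ℕ, B (m + N) = B m - 1 := by
    intro m
    have h1 : B (m + N) - B m = ∑ j ∈ Finset.Ico m (m + N), b (j : ZMod N) := by
      rw [hB]
      show cycB N b _ - cycB N b _ = _
      unfold cycB
      rw [Finset.sum_Ico_eq_sub _ (Nat.le_add_right m N)]
    have h2 : ∑ j ∈ Finset.Ico m (m + N), b (j : ZMod N)
        = ∑ j ∈ Finset.range N, b ((m : ZMod N) + (j : ZMod N)) := by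
      rw [Finset.sum_Ico_eq_sum_range]
      simp only [Nat.add_sub_cancel_left]
      apply Finset.sum_congr rfl
      intro j _
      push_cast
      ring_nf
    have h3 := sum_range_zmod N (fun x => b ((m : ZMod N) + x))
    have h4 : ∑ x : ZMod N, b ((m : ZMod N) + x) = ∑ x, b x :=
      Fintype.sum_equiv (Equiv.addLeft (m : ZMod N)) _ _ (fun x => rfl)
    omega
  have hBN : B N = -1 := by
    show cycB N b N = -1
    unfold cycB
    rw [sum_range_zmod N b]
    exact hb
  have hNmem : N ∈ Finset.Icc 1 N := Finset.mem_Icc.mpr ⟨hN, le_refl N⟩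
  obtain ⟨km, hkmmem, hkmmin⟩ :=
    Finset.exists_min_image (Finset.Icc 1 N) B ⟨N, hNmem⟩
  haveI : DecidablePred (fun k => ∀ j ∈ Finset.Icc 1 N, B k ≤ B j) :=
    fun _ => Finset.decidableDforallFinset
  set S : Finset ℕ := (Finset.Icc 1 N).filter (fun k => ∀ j ∈ Finset.Icc 1 N, B k ≤ B j) with hS
  have hSne : S.Nonempty := ⟨km, Finset.mem_filter.mpr ⟨hkmmem, hkmmin⟩⟩
  set k₀ : ℕ := S.min' hSne with hk₀
  have hk₀S : k₀ ∈ S := Finset.min'_mem _ _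
  have hk₀mem : k₀ ∈ Finset.Icc 1 N := (Finset.mem_filter.mp hk₀S).1
  have hk₀min : ∀ j ∈ Finset.Icc 1 N, B k₀ ≤ B j := (Finset.mem_filter.mp hk₀S).2
  have hk₀1 : 1 ≤ k₀ := (Finset.mem_Icc.mp hk₀mem).1
  have hk₀N : k₀ ≤ N := (Finset.mem_Icc.mp hk₀mem).2
  have hfirst : ∀ j, 1 ≤ j → j < k₀ → B k₀ + 1 ≤ B j := by
    intro j hj1 hjk
    have hjmem : j ∈ Finset.Icc 1 N := Finset.mem_Icc.mpr ⟨hj1, le_trans (le_of_lt hjk) hk₀N⟩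
    have hge : B k₀ ≤ B j := hk₀min j hjmem
    rcases eq_or_lt_of_le hge with heq | hlt
    · exfalso
      have hmem : j ∈ S := Finset.mem_filter.mpr ⟨hjmem, fun i hi => heq ▸ hk₀min i hi⟩
      have := Finset.min'_le S j hmem
      omega
    · omega
  have hrep : ∀ c : ZMod N, ∃ k₁, 1 ≤ k₁ ∧ k₁ ≤ N ∧ c = -((k₁ : ℕ) : ZMod N) := by
    intro c
    by_cases h : (-c).val = 0
    · refine ⟨N, hN, le_refl N, ?_⟩
      have h1 : -c = 0 := (ZMod.val_eq_zero _).mp h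
      rw [ZMod.natCast_self]
      simp [← h1]
    · refine ⟨(-c).val, Nat.one_le_iff_ne_zero.mpr h, le_of_lt (ZMod.val_lt _), ?_⟩
      rw [ZMod.natCast_val, ZMod.cast_id]
      simp
  refine ⟨-((k₀ : ℕ) : ZMod N), ?_, ?_⟩
  · intro k hk
    rw [hshift]
    rcases le_or_gt (k₀ + k) N with hle | hgt
    · have hmem : k₀ + k ∈ Finset.Icc 1 N := Finset.mem_Icc.mpr ⟨by omega, hle⟩
      have := hk₀min _ hmem
      omega
    · have hr : k₀ + k = (k₀ + k - N) + N := by omega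
      rw [hr, hper]
      have := hfirst (k₀ + k - N) (by omega) (by omega)
      omega
  · intro c hc
    obtain ⟨k₁, hk₁1, hk₁N, rfl⟩ := hrep c
    have hc' : ∀ k, k < N → 0 ≤ B (k₁ + k) - B k₁ := by
      intro k hk
      have := hc k hk
      rwa [hshift] at this
    suffices h : k₁ = k₀ by rw [h]
    by_contra hne
    rcases lt_or_gt_of_ne hne with hlt | hgt
    · have h1 := hc' (k₀ - k₁) (by omega)
      have h2 : k₁ + (k₀ - k₁) = k₀ := by omega
      rw [h2] at h1
      have := hfirst k₁ hk₁1 hlt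
      omega
    · have h1 := hc' (k₀ + N - k₁) (by omega)
      have h2 : k₁ + (k₀ + N - k₁) = k₀ + N := by omega
      rw [h2, hper] at h1
      have := hk₀min k₁ (Finset.mem_Icc.mpr ⟨hk₁1, hk₁N⟩)
      omega

lemma pollak (n : ℕ) (f : Fin n → ZMod (n + 1)) :
    ∃! c : ZMod (n + 1), IsParkingFunction n (fun i => (f i + c).val + 1) := by
  classical
  have hN : (0:ℕ) < n + 1 := Nat.succ_pos n
  set b : ZMod (n+1) → ℤ :=
    fun t => ((Finset.univ.filter (fun i => f i = t)).card : ℤ) - 1 with hb'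
  have hcards : ∑ t : ZMod (n+1), ((Finset.univ.filter (fun i => f i = t)).card : ℤ) = n := by
    have := Finset.card_eq_sum_card_fiberwise
      (s := (Finset.univ : Finset (Fin n))) (t := (Finset.univ : Finset (ZMod (n+1))))
      (f := f) (fun x _ => Finset.mem_univ _)
    rw [Finset.card_univ, Fintype.card_fin] at this
    exact_mod_cast this.symm
  have hb : ∑ t, b t = -1 := by
    rw [hb']
    rw [Finset.sum_sub_distrib]
    rw [hcards]
    simp [ZMod.card]
  have hcard : ∀ (c : ZMod (n+1)) (k : ℕ), k < n+1 →
      ((Finset.univ.filter fun i => (f i + c).val < k).card : ℤ)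
        = ∑ j ∈ Finset.range k,
            (((Finset.univ.filter (fun i => f i = (j : ZMod (n+1)) - c)).card : ℤ)) := by
    intro c k hk
    have hset : (Finset.univ.filter fun i => (f i + c).val < k)
        = (Finset.range k).biUnion
            (fun j => Finset.univ.filter (fun i => f i = (j : ZMod (n+1)) - c)) := by
      ext i
      simp only [Finset.mem_filter, Finset.mem_univ, true_and, Finset.mem_biUnion,
        Finset.mem_range]
      constructor
      · intro hi
        refine ⟨(f i + c).val, hi, ?_⟩
        have h1 : (((f i + c).val : ℕ) : ZMod (n+1)) = f i + c := by
          rw [ZMod.natCast_val, ZMod.cast_id]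
        rw [h1]
        ring
      · rintro ⟨j, hj, hfi⟩
        have h1 : f i + c = ((j : ℕ) : ZMod (n+1)) := by rw [hfi]; ring
        rw [h1, ZMod.val_cast_of_lt (by omega)]
        exact hj
    have hdisj : ∀ x ∈ Finset.range k, ∀ y ∈ Finset.range k, x ≠ y →
        Disjoint (Finset.univ.filter (fun i => f i = (x : ZMod (n+1)) - c))
          (Finset.univ.filter (fun i => f i = (y : ZMod (n+1)) - c)) := by
      intro x hx y hy hxy
      simp only [Finset.mem_range] at hx hy
      rw [Finset.disjoint_left]
      intro i hi1 hi2
      simp only [Finset.mem_filter, Finset.mem_univ, true_and] at hi1 hi2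
      apply hxy
      have h1 : ((x : ℕ) : ZMod (n+1)) = ((y : ℕ) : ZMod (n+1)) := by
        have := hi1.symm.trans hi2
        exact sub_left_injective.eq_iff.mp (by linear_combination this)
      have := congrArg ZMod.val h1
      rwa [ZMod.val_cast_of_lt (by omega), ZMod.val_cast_of_lt (by omega)] at this
    rw [hset, Finset.card_biUnion hdisj]
    push_cast
    rfl
  have key : ∀ c : ZMod (n+1),
      (IsParkingFunction n (fun i => (f i + c).val + 1) ↔
        ∀ k, k < n+1 → 0 ≤ ∑ j ∈ Finset.range k, b ((j : ZMod (n+1)) - c)) := by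
    intro c
    rw [isPF_iff]
    have htriv : ∀ i : Fin n, 1 ≤ (f i + c).val + 1 := fun i => Nat.le_add_left 1 _
    have hfe : ∀ k : ℕ, (Finset.univ.filter fun i => (f i + c).val + 1 ≤ k)
        = (Finset.univ.filter fun i => (f i + c).val < k) := by
      intro k
      apply Finset.filter_congr
      intro i _
      omega
    have hsum : ∀ k : ℕ, k < n+1 → ∑ j ∈ Finset.range k, b ((j : ZMod (n+1)) - c)
        = ((Finset.univ.filter fun i => (f i + c).val < k).card : ℤ) - k := by
      intro k hk
      rw [hb']
      rw [Finset.sum_sub_distrib, hcard c k hk]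
      simp
    constructor
    · rintro ⟨-, h⟩ k hk
      rw [hsum k hk]
      have := h k (by omega)
      rw [hfe k] at this
      omega
    · intro h
      refine ⟨htriv, fun k hk => ?_⟩
      have h2 := h k (by omega)
      rw [hsum k (by omega)] at h2
      rw [hfe k]
      omega
  obtain ⟨c, hc, huniq⟩ := cycle_lemma (n+1) b hb
  exact ⟨c, (key c).mpr hc, fun c' hc' => huniq c' ((key c').mp hc')⟩

lemma pf_le {n : ℕ} {π : Fin n → ℕ} (h : IsParkingFunction n π) : ∀ i, π i ≤ n := by
  obtain ⟨-, σ, -, hle⟩ := h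
  intro i
  have := hle (σ.symm i)
  rw [σ.apply_symm_apply] at this
  have := (σ.symm i).2
  omega

lemma pf_comp_perm {n : ℕ} {π : Fin n → ℕ} (h : IsParkingFunction n π) (e : Equiv.Perm (Fin n)) :
    IsParkingFunction n (π ∘ e) := by
  obtain ⟨h1, σ, hm, hle⟩ := h
  refine ⟨fun i => h1 (e i), σ.trans e.symm, ?_, ?_⟩
  · have : (π ∘ e) ∘ (σ.trans e.symm) = π ∘ σ := by
      funext i
      simp [Equiv.trans_apply]
    rw [this]; exact hm
  · intro i
    simp only [Equiv.trans_apply, Function.comp_apply, Equiv.apply_symm_apply]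
    exact hle i

lemma strictMono_eq_of_comp_perm {s : ℕ} {u u' : Fin s → ℕ} (hu : StrictMono u)
    (hu' : StrictMono u') (τ τ' : Equiv.Perm (Fin s)) (h : u ∘ τ = u' ∘ τ') : u = u' := by
  classical
  have himg : Finset.univ.image u = Finset.univ.image u' := by
    ext x
    simp only [Finset.mem_image, Finset.mem_univ, true_and]
    constructor
    · rintro ⟨k, rfl⟩
      refine ⟨τ' (τ.symm k), ?_⟩
      have := congrFun h (τ.symm k)
      simp only [Function.comp_apply, Equiv.apply_symm_apply] at this
      omega
    · rintro ⟨k, rfl⟩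
      refine ⟨τ (τ'.symm k), ?_⟩
      have := congrFun h (τ'.symm k)
      simp only [Function.comp_apply, Equiv.apply_symm_apply] at this
      omega
  have hcard : (Finset.univ.image u).card = s := by
    rw [Finset.card_image_of_injective _ hu.injective, Finset.card_univ, Fintype.card_fin]
  have h1 := Finset.orderEmbOfFin_unique hcard
    (f := u) (fun x => Finset.mem_image_of_mem u (Finset.mem_univ x)) hu
  have h2 := Finset.orderEmbOfFin_unique hcard
    (f := u') (fun x => himg ▸ Finset.mem_image_of_mem u' (Finset.mem_univ x)) hu'
  rw [h1, h2]

section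
variable (n s : ℕ)

def Dset : Set (Fin n → ℕ) :=
  {π | IsParkingFunction n π ∧
    ∀ i j : Fin n, (i : ℕ) < s → (j : ℕ) < s → i ≠ j → π i ≠ π j}

def Fset : Set (Fin n → ZMod (n + 1)) :=
  {f | ∀ i j : Fin n, (i : ℕ) < s → (j : ℕ) < s → f i = f j → i = j}

lemma card_Fset (hs : s ≤ n) :
    Nat.card (Fset n s) = (n + 1).descFactorial s * (n + 1) ^ (n - s) := by
  classical
  have e : Fset n s ≃ (Fin s ↪ ZMod (n + 1)) × (Fin (n - s) → ZMod (n + 1)) := by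
    refine
      { toFun := fun f =>
          (⟨fun k => f.1 (Fin.castLE hs k), ?_⟩, fun k => f.1 ⟨s + k, by omega⟩)
        invFun := fun p =>
          ⟨fun i => if hi : (i : ℕ) < s then p.1 ⟨i, hi⟩ else p.2 ⟨i - s, by omega⟩, ?_⟩
        left_inv := ?_
        right_inv := ?_ }
    · intro k l hkl
      have h2 := f.2 (Fin.castLE hs k) (Fin.castLE hs l) k.2 l.2 hkl
      have h3 : ((Fin.castLE hs k : Fin n) : ℕ) = ((Fin.castLE hs l : Fin n) : ℕ) :=
        congrArg Fin.val h2
      exact Fin.ext h3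
    · intro i j hi hj hij
      simp only [dif_pos hi, dif_pos hj] at hij
      have h2 := p.1.injective hij
      have h3 : ((⟨(i:ℕ), hi⟩ : Fin s) : ℕ) = ((⟨(j:ℕ), hj⟩ : Fin s) : ℕ) :=
        congrArg Fin.val h2
      exact Fin.ext h3
    · rintro ⟨f, hf⟩
      ext i
      by_cases hi : (i : ℕ) < s
      · simp only [dif_pos hi]
        congr 1
      · simp only [dif_neg hi]
        congr 1
        apply Fin.ext
        show s + ((i : ℕ) - s) = (i : ℕ)
        omega
    · rintro ⟨g, h⟩
      refine Prod.ext ?_ ?_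
      · apply Function.Embedding.ext
        intro k
        simp only [Function.Embedding.coeFn_mk]
        rw [dif_pos (by exact k.2 : ((Fin.castLE hs k : Fin n) : ℕ) < s)]
        congr 1
      · funext k
        simp only
        rw [dif_neg (show ¬ ((⟨s + (k : ℕ), by omega⟩ : Fin n) : ℕ) < s by
          show ¬ (s + (k : ℕ) < s); omega)]
        congr 1
        apply Fin.ext
        show s + (k : ℕ) - s = (k : ℕ)
        omega
  rw [Nat.card_congr e, Nat.card_prod, Nat.card_eq_fintype_card, Nat.card_eq_fintype_card,
    Fintype.card_embedding_eq, ZMod.card, Fintype.card_fin, Fintype.card_fun, ZMod.card,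
    Fintype.card_fin]

lemma card_Fset_eq (hs : s ≤ n) :
    Nat.card (Fset n s) = (n + 1) * Nat.card (Dset n s) := by
  classical
  have hΦ : ∀ (π : Fin n → ℕ), π ∈ Dset n s → ∀ c : ZMod (n+1),
      (fun i => (((π i - 1 : ℕ) : ZMod (n+1)) - c)) ∈ Fset n s := by
    intro π hπ c i j hi hj hij
    by_contra hne
    have hne' : π i ≠ π j := hπ.2 i j hi hj hne
    apply hne'
    have h1 : (((π i - 1 : ℕ) : ZMod (n+1))) = (((π j - 1 : ℕ) : ZMod (n+1))) := by
      linear_combination hij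
    have hle1 := pf_le hπ.1 i
    have hle2 := pf_le hπ.1 j
    have hge1 := hπ.1.1 i
    have hge2 := hπ.1.1 j
    have := congrArg ZMod.val h1
    rw [ZMod.val_cast_of_lt (by omega), ZMod.val_cast_of_lt (by omega)] at this
    omega
  -- the recovery computation
  have hrec : ∀ (π : Fin n → ℕ), π ∈ Dset n s → ∀ c : ZMod (n+1), ∀ i,
      ((((π i - 1 : ℕ) : ZMod (n+1)) - c) + c).val + 1 = π i := by
    intro π hπ c i
    have hle1 := pf_le hπ.1 i
    have hge1 := hπ.1.1 i
    rw [sub_add_cancel, ZMod.val_cast_of_lt (by omega)]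
    omega
  set Φ : (Dset n s) × ZMod (n+1) → (Fset n s) :=
    fun p => ⟨fun i => (((p.1.1 i - 1 : ℕ) : ZMod (n+1)) - p.2), hΦ p.1.1 p.1.2 p.2⟩ with hΦdef
  have hbij : Function.Bijective Φ := by
    constructor
    · rintro ⟨⟨π, hπ⟩, c⟩ ⟨⟨π', hπ'⟩, c'⟩ heq
      have heq' : ∀ i, (((π i - 1 : ℕ) : ZMod (n+1)) - c) = (((π' i - 1 : ℕ) : ZMod (n+1)) - c') :=
        fun i => congrFun (congrArg Subtype.val heq) i
      set f : Fin n → ZMod (n+1) := fun i => (((π i - 1 : ℕ) : ZMod (n+1)) - c) with hfdef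
      obtain ⟨c₀, hc₀, huniq⟩ := pollak n f
      have hpc : IsParkingFunction n (fun i => (f i + c).val + 1) := by
        have : (fun i => (f i + c).val + 1) = π := funext (hrec π hπ c)
        rw [this]; exact hπ.1
      have hpc' : IsParkingFunction n (fun i => (f i + c').val + 1) := by
        have h0 : (fun i => (f i + c').val + 1) = π' := by
          funext i
          rw [hfdef]
          simp only
          rw [heq' i]
          exact hrec π' hπ' c' i
        rw [h0]; exact hπ'.1
      have hcc : c = c' := by rw [huniq c hpc, huniq c' hpc']
      have hππ : π = π' := by
        funext i
        have h1 := heq' i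
        rw [hcc] at h1
        have h2 : (((π i - 1 : ℕ) : ZMod (n+1))) = (((π' i - 1 : ℕ) : ZMod (n+1))) := by
          linear_combination h1
        have hle1 := pf_le hπ.1 i
        have hle2 := pf_le hπ'.1 i
        have hge1 := hπ.1.1 i
        have hge2 := hπ'.1.1 i
        have := congrArg ZMod.val h2
        rw [ZMod.val_cast_of_lt (by omega), ZMod.val_cast_of_lt (by omega)] at this
        omega
      subst hcc
      subst hππ
      rfl
    · rintro ⟨f, hf⟩
      obtain ⟨c, hc, -⟩ := pollak n f
      set π : Fin n → ℕ := fun i => (f i + c).val + 1 with hπdef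
      have hπD : π ∈ Dset n s := by
        refine ⟨hc, ?_⟩
        intro i j hi hj hij hval
        apply hij
        apply hf i j hi hj
        have hval' : (f i + c).val + 1 = (f j + c).val + 1 := hval
        have h1 : (f i + c).val = (f j + c).val := by omega
        have h2 : f i + c = f j + c := by
          have := congrArg (fun m : ℕ => (m : ZMod (n+1))) h1
          simpa only [ZMod.natCast_val, ZMod.cast_id] using this
        exact add_right_cancel h2
      refine ⟨⟨⟨π, hπD⟩, c⟩, ?_⟩
      apply Subtype.ext
      funext i
      show (((π i - 1 : ℕ) : ZMod (n+1)) - c) = f i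
      rw [hπdef]
      simp only [Nat.add_sub_cancel]
      rw [ZMod.natCast_val, ZMod.cast_id]
      ring
  rw [Nat.card_congr (Equiv.ofBijective Φ hbij).symm, Nat.card_prod, Nat.card_eq_fintype_card
    (α := ZMod (n+1)), ZMod.card]
  ring

end

def Sset (n s : ℕ) : Set (Fin n → ℕ) :=
  {π | IsParkingFunction n π ∧
    ∀ i j : Fin n, (i : ℕ) < (j : ℕ) → (j : ℕ) < s → π i < π j}

section
variable {n s : ℕ}

def fsub (hs : s ≤ n) : Fin s ≃ {i : Fin n // (i : ℕ) < s} where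
  toFun k := ⟨Fin.castLE hs k, k.2⟩
  invFun i := ⟨(i.1 : ℕ), i.2⟩
  left_inv k := Fin.ext rfl
  right_inv i := Subtype.ext (Fin.ext rfl)

def extPerm (hs : s ≤ n) (τ : Equiv.Perm (Fin s)) : Equiv.Perm (Fin n) :=
  τ.extendDomain (fsub hs)

lemma extPerm_lt (hs : s ≤ n) (τ : Equiv.Perm (Fin s)) (k : Fin s) :
    extPerm hs τ (Fin.castLE hs k) = Fin.castLE hs (τ k) :=
  Equiv.Perm.extendDomain_apply_image τ (fsub hs) k

lemma extPerm_ge (hs : s ≤ n) (τ : Equiv.Perm (Fin s)) (i : Fin n) (hi : ¬ (i : ℕ) < s) :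
    extPerm hs τ i = i :=
  Equiv.Perm.extendDomain_apply_not_subtype τ (fsub hs) hi

lemma extPerm_inv (hs : s ≤ n) (τ : Equiv.Perm (Fin s)) :
    extPerm hs τ⁻¹ = (extPerm hs τ)⁻¹ :=
  rfl

lemma Sset_inj (π : Fin n → ℕ) (hπ : π ∈ Sset n s) :
    ∀ a b : Fin n, (a : ℕ) < s → (b : ℕ) < s → π a = π b → a = b := by
  intro a b ha hb hab
  rcases lt_trichotomy (a : ℕ) (b : ℕ) with h | h | h
  · exact absurd hab (ne_of_lt (hπ.2 a b h hb))
  · exact Fin.ext h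
  · exact absurd hab.symm (ne_of_lt (hπ.2 b a h ha))

lemma card_Dset (hs : s ≤ n) :
    Nat.card (Dset n s) = Nat.card (Sset n s) * s.factorial := by
  classical
  have hΦmem : ∀ (π : Fin n → ℕ), π ∈ Sset n s → ∀ τ : Equiv.Perm (Fin s),
      π ∘ (extPerm hs τ) ∈ Dset n s := by
    intro π hπ τ
    refine ⟨pf_comp_perm hπ.1 _, ?_⟩
    intro i j hi hj hij
    intro hval
    apply hij
    have hie : i = Fin.castLE hs ⟨(i : ℕ), hi⟩ := Fin.ext rfl
    have hje : j = Fin.castLE hs ⟨(j : ℕ), hj⟩ := Fin.ext rfl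
    rw [hie, hje] at hval
    simp only [Function.comp_apply] at hval
    rw [extPerm_lt hs τ, extPerm_lt hs τ] at hval
    have h1 := Sset_inj π hπ _ _ (τ ⟨(i : ℕ), hi⟩).2 (τ ⟨(j : ℕ), hj⟩).2 hval
    have h2 : τ ⟨(i : ℕ), hi⟩ = τ ⟨(j : ℕ), hj⟩ := by
      apply Fin.ext
      have h3 : ((Fin.castLE hs (τ ⟨(i : ℕ), hi⟩) : Fin n) : ℕ)
          = ((Fin.castLE hs (τ ⟨(j : ℕ), hj⟩) : Fin n) : ℕ) := congrArg Fin.val h1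
      exact h3
    have h3 := τ.injective h2
    rw [hie, hje]
    rw [h3]
  set Φ : (Sset n s) × Equiv.Perm (Fin s) → (Dset n s) :=
    fun p => ⟨p.1.1 ∘ (extPerm hs p.2), hΦmem p.1.1 p.1.2 p.2⟩ with hΦdef
  have hbij : Function.Bijective Φ := by
    constructor
    · rintro ⟨⟨π, hπ⟩, τ⟩ ⟨⟨π', hπ'⟩, τ'⟩ heq
      have heq' : π ∘ (extPerm hs τ) = π' ∘ (extPerm hs τ') := congrArg Subtype.val heq
      set u : Fin s → ℕ := fun k => π (Fin.castLE hs k) with hu'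
      set u' : Fin s → ℕ := fun k => π' (Fin.castLE hs k) with hu''
      have hu : StrictMono u := by
        intro k l hkl
        exact hπ.2 _ _ hkl l.2
      have hu2 : StrictMono u' := by
        intro k l hkl
        exact hπ'.2 _ _ hkl l.2
      have hcomp : u ∘ τ = u' ∘ τ' := by
        funext k
        have h1 := congrFun heq' (Fin.castLE hs k)
        simp only [Function.comp_apply] at h1 ⊢
        rw [extPerm_lt, extPerm_lt] at h1
        exact h1
      have huu : u = u' := strictMono_eq_of_comp_perm hu hu2 τ τ' hcomp
      have hππ : π = π' := by
        funext i
        by_cases hi : (i : ℕ) < s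
        · have hie : i = Fin.castLE hs ⟨(i : ℕ), hi⟩ := Fin.ext rfl
          rw [hie]
          exact congrFun huu ⟨(i : ℕ), hi⟩
        · have h1 := congrFun heq' i
          simp only [Function.comp_apply] at h1
          rw [extPerm_ge hs τ i hi, extPerm_ge hs τ' i hi] at h1
          exact h1
      have hττ : τ = τ' := by
        apply Equiv.ext
        intro k
        apply hu.injective
        have h1 := congrFun hcomp k
        rw [huu] at h1 ⊢
        exact h1
      subst hππ
      subst hττ
      rfl
    · rintro ⟨ρ, hρ⟩
      set u : Fin s → ℕ := fun k => ρ (Fin.castLE hs k) with hu'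
      have huinj : Function.Injective u := by
        intro k l hkl
        by_contra hne
        have h1 : Fin.castLE hs k ≠ Fin.castLE hs l := by
          intro h
          apply hne
          apply Fin.ext
          have h3 : ((Fin.castLE hs k : Fin n) : ℕ) = ((Fin.castLE hs l : Fin n) : ℕ) :=
            congrArg Fin.val h
          exact h3
        exact hρ.2 _ _ k.2 l.2 h1 hkl
      set τ₀ := Tuple.sort u with hτ₀
      have hmono : Monotone (u ∘ τ₀) := Tuple.monotone_sort u
      have hstrict : StrictMono (u ∘ τ₀) :=
        hmono.strictMono_of_injective (huinj.comp τ₀.injective)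
      have hπS : ρ ∘ (extPerm hs τ₀) ∈ Sset n s := by
        refine ⟨pf_comp_perm hρ.1 _, ?_⟩
        intro i j hij hj
        have hi : (i : ℕ) < s := lt_trans hij hj
        have hie : i = Fin.castLE hs ⟨(i : ℕ), hi⟩ := Fin.ext rfl
        have hje : j = Fin.castLE hs ⟨(j : ℕ), hj⟩ := Fin.ext rfl
        rw [hie, hje]
        simp only [Function.comp_apply]
        rw [extPerm_lt, extPerm_lt]
        have : (⟨(i : ℕ), hi⟩ : Fin s) < ⟨(j : ℕ), hj⟩ := hij
        exact hstrict this
      refine ⟨⟨⟨ρ ∘ (extPerm hs τ₀), hπS⟩, τ₀⁻¹⟩, ?_⟩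
      apply Subtype.ext
      funext i
      show ρ (extPerm hs τ₀ (extPerm hs τ₀⁻¹ i)) = ρ i
      rw [extPerm_inv hs τ₀]
      rw [Equiv.Perm.inv_def, Equiv.apply_symm_apply]
  rw [← Nat.card_congr (Equiv.ofBijective Φ hbij), Nat.card_prod, Nat.card_eq_fintype_card
    (α := Equiv.Perm (Fin s)), Fintype.card_perm, Fintype.card_fin]
end

/-- The number of parking functions of length `n` whose first `s` coordinates are
strictly increasing is `C(n+1, s) · (n+1)^(n-s-1)`. -/
theorem card_parkingFunctions_firstIncreasing (n s : ℕ) (hs : s ≤ n) :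
    (Set.ncard {π : Fin n → ℕ | IsParkingFunction n π ∧
        ∀ i j : Fin n, (i : ℕ) < (j : ℕ) → (j : ℕ) < s → π i < π j} : ℚ) =
      ((n + 1).choose s : ℚ) * ((n : ℚ) + 1) ^ ((n : ℤ) - (s : ℤ) - 1) := by
  have hset : {π : Fin n → ℕ | IsParkingFunction n π ∧
      ∀ i j : Fin n, (i : ℕ) < (j : ℕ) → (j : ℕ) < s → π i < π j} = Sset n s := rfl
  rw [hset, ← Nat.card_coe_set_eq]
  have hnat : (n + 1) * (Nat.card (Sset n s) * s.factorial)
      = (s.factorial * (n + 1).choose s) * (n + 1) ^ (n - s) := by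
    rw [← card_Dset hs, ← card_Fset_eq n s hs, card_Fset n s hs,
      Nat.descFactorial_eq_factorial_mul_choose]
  have hq : ((n : ℚ) + 1) ≠ 0 := by positivity
  have hfac : ((s.factorial : ℚ)) ≠ 0 := by
    exact_mod_cast (Nat.factorial_pos s).ne'
  have hexp : (n : ℤ) - (s : ℤ) - 1 = ((n - s : ℕ) : ℤ) - 1 := by omega
  rw [hexp, zpow_sub_one₀ hq, zpow_natCast]
  have hQ : ((n : ℚ) + 1) * (Nat.card (Sset n s) * s.factorial)
      = ((s.factorial : ℚ) * (n + 1).choose s) * ((n : ℚ) + 1) ^ (n - s) := by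
    exact_mod_cast congrArg (fun m : ℕ => (m : ℚ)) hnat
  field_simp
  apply mul_left_cancel₀ hfac
  linear_combination hQ
end

section
/- Let 0 ≤ k ≤ n. The number of parking functions of length n with exactly k fixed points equals (1/(n+1)^2) · C(n+1, k) · (n^(n-k+1) + (-1)^(n+k)). -/
/-- The number of fixed points of `π` (indices `i` with `π_i = i`, 1-indexed). -/
def fixedPointCount (n : ℕ) (π : Fin n → ℕ) : ℕ :=
  (Finset.univ.filter (fun i : Fin n => π i = (i : ℕ) + 1)).card

namespace PFaux
open Finset



variable (n : ℕ)

/-- count of residue `v` in a multiset over `ZMod (n+1)` -/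
def cnt (M : Multiset (ZMod (n+1))) (v : ℕ) : ℕ := M.count ((v : ZMod (n+1)))

/-- prefix-sum height function -/
def ht (M : Multiset (ZMod (n+1))) (t : ℕ) : ℤ :=
  (∑ v ∈ range t, (cnt n M (v+1) : ℤ)) - t

def shiftM (c : ZMod (n+1)) (M : Multiset (ZMod (n+1))) : Multiset (ZMod (n+1)) :=
  M.map (· + c)

def IsParkM (M : Multiset (ZMod (n+1))) : Prop :=
  ∀ t ≤ n, 0 ≤ ht n M t

lemma sum_cnt_period (M : Multiset (ZMod (n+1))) (a : ℕ) :
    ∑ v ∈ range (n+1), cnt n M (a + v) = Multiset.card M := by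
  classical
  have h1 : ∑ x ∈ (univ : Finset (ZMod (n+1))), M.count x = Multiset.card M := by
    rw [← Multiset.toFinset_sum_count_eq M]
    exact (Finset.sum_subset (subset_univ _) (by
      intro x _ hx
      simpa [Multiset.count_eq_zero] using fun h => hx (Multiset.mem_toFinset.2 h))).symm
  rw [← h1]
  apply Finset.sum_nbij' (i := fun v => ((a + v : ℕ) : ZMod (n+1)))
    (j := fun x => (x - (a : ZMod (n+1))).val)
  · intro v _; exact mem_univ _
  · intro x _; exact mem_range.2 (ZMod.val_lt _)
  · intro v hv
    have hv' := mem_range.1 hv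
    push_cast
    have : ((a : ZMod (n+1)) + (v : ZMod (n+1)) - (a : ZMod (n+1))) = (v : ZMod (n+1)) := by ring
    rw [this, ZMod.val_cast_of_lt hv']
  · intro x _
    push_cast
    rw [ZMod.natCast_val, ZMod.cast_id]
    ring
  · intro v _; rfl

lemma ht_period (M : Multiset (ZMod (n+1))) (hM : Multiset.card M = n) (t : ℕ) :
    ht n M (t + (n+1)) = ht n M t - 1 := by
  unfold ht
  have : ∑ v ∈ range (t + (n+1)), (cnt n M (v+1) : ℤ)
      = ∑ v ∈ range t, (cnt n M (v+1) : ℤ) + ∑ v ∈ range (n+1), (cnt n M (t + v + 1) : ℤ) := by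
    rw [Finset.sum_range_add]
  rw [this]
  have h2 : ∑ v ∈ range (n+1), (cnt n M (t + v + 1) : ℤ) = (n : ℤ) := by
    have := sum_cnt_period n M (t + 1)
    rw [hM] at this
    calc ∑ v ∈ range (n+1), (cnt n M (t + v + 1) : ℤ)
        = ((∑ v ∈ range (n+1), cnt n M (t + 1 + v) : ℕ) : ℤ) := by
          push_cast; apply Finset.sum_congr rfl; intro v _; ring_nf
      _ = (n : ℤ) := by rw [this]
  rw [h2]; push_cast; ring



lemma cnt_shift (M : Multiset (ZMod (n+1))) (c : ZMod (n+1)) (v : ℕ) :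
    cnt n (shiftM n c M) v = cnt n M (v + (-c).val) := by
  unfold cnt shiftM
  have h1 : ((v + (-c).val : ℕ) : ZMod (n+1)) = (v : ZMod (n+1)) - c := by
    push_cast
    rw [ZMod.natCast_val, ZMod.cast_id]
    ring
  rw [h1]
  have := Multiset.count_map_eq_count' (fun x => x + c) M (by
    intro a b hab; simpa using hab) ((v : ZMod (n+1)) - c)
  simpa using this

lemma ht_shift (M : Multiset (ZMod (n+1))) (c : ZMod (n+1)) (t : ℕ) :
    ht n (shiftM n c M) t = ht n M (t + (-c).val) - ht n M ((-c).val) := by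
  unfold ht
  have h1 : ∀ v, cnt n (shiftM n c M) (v+1) = cnt n M ((-c).val + v + 1) := by
    intro v; rw [cnt_shift]; ring_nf
  have h2 : ∑ v ∈ range t, (cnt n (shiftM n c M) (v+1) : ℤ)
      = ∑ v ∈ range t, (cnt n M ((-c).val + v + 1) : ℤ) := by
    apply Finset.sum_congr rfl; intro v _; rw [h1]
  rw [h2]
  have h3 : ∑ v ∈ range (t + (-c).val), (cnt n M (v+1) : ℤ)
      = ∑ v ∈ range ((-c).val), (cnt n M (v+1) : ℤ)
        + ∑ v ∈ range t, (cnt n M ((-c).val + v + 1) : ℤ) := by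
    rw [Nat.add_comm t, Finset.sum_range_add]
  push_cast at h3 ⊢
  omega



/-- condition on starting point -/
def Cc (M : Multiset (ZMod (n+1))) (e : ℕ) : Prop := ∀ t ≤ n, ht n M e ≤ ht n M (t + e)

lemma park_shift_iff (M : Multiset (ZMod (n+1))) (c : ZMod (n+1)) :
    IsParkM n (shiftM n c M) ↔ Cc n M ((-c).val) := by
  unfold IsParkM Cc
  constructor
  · intro H t ht'
    have := H t ht'
    rw [ht_shift] at this
    omega
  · intro H t ht'
    rw [ht_shift]
    have := H t ht'
    omega

lemma Cc_unique (M : Multiset (ZMod (n+1))) (hM : Multiset.card M = n)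
    {e e' : ℕ} (he : e < n+1) (he' : e' < n+1) (hC : Cc n M e) (hC' : Cc n M e') : e = e' := by
  by_contra hne
  -- wlog via a helper : derive contradiction from e < e'
  have key : ∀ a b : ℕ, a < n+1 → b < n+1 → Cc n M a → Cc n M b → a < b → False := by
    intro a b ha hb hCa hCb hab
    -- from Cc b at t = a + (n+1) - b : ht (a + n+1) ≥ ht b, i.e. ht a - 1 ≥ ht b
    have h1 : ht n M a - 1 ≥ ht n M b := by
      have ht1 : a + (n+1) - b ≤ n := by omega
      have := hCb (a + (n+1) - b) ht1
      have heq : a + (n+1) - b + b = a + (n+1) := by omega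
      rw [heq] at this
      rw [ht_period n M hM a] at this
      omega
    -- from Cc a at t = b - a : ht b ≥ ht a
    have h2 : ht n M b ≥ ht n M a := by
      have := hCa (b - a) (by omega)
      have heq : b - a + a = b := by omega
      rwa [heq] at this
    omega
  rcases Nat.lt_or_ge e e' with h | h
  · exact key e e' he he' hC hC' h
  · exact key e' e he' he hC' hC (by omega)

lemma Cc_exists (M : Multiset (ZMod (n+1))) (hM : Multiset.card M = n) :
    ∃ e < n+1, Cc n M e := by
  classical
  -- minimum of ht over range (n+1)
  obtain ⟨m, hm_mem, hm_min⟩ := Finset.exists_min_image (range (n+1)) (ht n M) ⟨0, by simp⟩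
  -- least index attaining the min value
  have hex : ∃ e, e < n+1 ∧ ht n M e = ht n M m := ⟨m, mem_range.1 hm_mem, rfl⟩
  classical
  let e := Nat.find hex
  obtain ⟨heN, heval⟩ := Nat.find_spec hex
  refine ⟨e, heN, ?_⟩
  intro t ht'
  rcases Nat.lt_or_ge (t + e) (n+1) with hlt | hge
  · rw [heval]; exact hm_min _ (mem_range.2 hlt)
  · -- t + e = s + (n+1), s < e
    set s := t + e - (n+1) with hs
    have hs1 : s < e := by omega
    have hs2 : t + e = s + (n+1) := by omega
    rw [hs2, ht_period n M hM s]
    have hsn : s < n + 1 := by omega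
    have h3 : ht n M s ≠ ht n M m := fun hcontra => by
      have := Nat.find_min hex hs1
      exact this ⟨hsn, hcontra⟩
    have h4 : ht n M m ≤ ht n M s := hm_min _ (mem_range.2 hsn)
    rw [heval]
    omega

theorem existsUnique_shift (M : Multiset (ZMod (n+1))) (hM : Multiset.card M = n) :
    ∃! c : ZMod (n+1), IsParkM n (shiftM n c M) := by
  obtain ⟨e, heN, hC⟩ := Cc_exists n M hM
  refine ⟨-(e : ZMod (n+1)), ?_, ?_⟩
  · show IsParkM n (shiftM n _ M)
    rw [park_shift_iff]
    have : (-(-(e : ZMod (n+1)))).val = e := by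
      rw [neg_neg]; exact ZMod.val_cast_of_lt heN
    rwa [this]
  · intro c hc
    rw [park_shift_iff] at hc
    have he' : (-c).val < n + 1 := ZMod.val_lt _
    have : (-c).val = e := Cc_unique n M hM he' heN hc hC
    have h2 : -c = (e : ZMod (n+1)) := by
      rw [← this, ZMod.natCast_val, ZMod.cast_id]
    rw [← h2, neg_neg]


/-- the multiset of values of a function, viewed in `ZMod (n+1)` -/
def MOf (π : Fin n → ℕ) : Multiset (ZMod (n+1)) :=
  Multiset.map (fun i => ((π i : ℕ) : ZMod (n+1))) univ.val

lemma card_MOf (π : Fin n → ℕ) : Multiset.card (MOf n π) = n := by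
  simp [MOf]

lemma cnt_MOf (π : Fin n → ℕ) (v : ℕ) (hv : 1 ≤ v) (hvn : v ≤ n)
    (hπ : ∀ i, π i ≤ n) :
    cnt n (MOf n π) v = (univ.filter (fun i => π i = v)).card := by
  classical
  unfold cnt MOf
  rw [Multiset.count_map]
  have : (univ.filter (fun i => π i = v)).card
      = Multiset.card (Multiset.filter (fun i => π i = v) univ.val) := by
    rw [← Finset.filter_val]; rfl
  rw [this]
  congr 1
  apply Multiset.filter_congr
  intro i _
  constructor
  · intro h
    have h1 : ((π i : ℕ) : ZMod (n+1)).val = π i := ZMod.val_cast_of_lt (by have := hπ i; omega)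
    have h2 : ((v : ℕ) : ZMod (n+1)).val = v := ZMod.val_cast_of_lt (by omega)
    rw [← h1, ← h2, h]
  · intro h; rw [h]

lemma sum_cnt_MOf (π : Fin n → ℕ) (hπ : ∀ i, 1 ≤ π i ∧ π i ≤ n) (t : ℕ) (ht' : t ≤ n) :
    ∑ v ∈ range t, cnt n (MOf n π) (v+1) = (univ.filter (fun i => π i ≤ t)).card := by
  classical
  induction t with
  | zero =>
      simp only [range_zero, sum_empty]
      symm
      rw [Finset.card_eq_zero, Finset.filter_eq_empty_iff]
      intro i _
      have := (hπ i).1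
      omega
  | succ t ih =>
      rw [Finset.sum_range_succ, ih (by omega)]
      rw [cnt_MOf n π (t+1) (by omega) (by omega) (fun i => (hπ i).2)]
      have hsplit : (univ.filter (fun i => π i ≤ t + 1))
          = (univ.filter (fun i => π i ≤ t)) ∪ (univ.filter (fun i => π i = t + 1)) := by
        ext i
        simp only [mem_filter, mem_union, mem_univ, true_and]
        omega
      rw [hsplit, Finset.card_union_of_disjoint]
      rw [Finset.disjoint_filter]
      intro i _ h1 h2
      omega

lemma isParkM_MOf_iff (π : Fin n → ℕ) (hπ : ∀ i, 1 ≤ π i ∧ π i ≤ n) :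
    IsParkM n (MOf n π) ↔ ∀ t ≤ n, t ≤ (univ.filter (fun i => π i ≤ t)).card := by
  unfold IsParkM ht
  constructor
  · intro H t ht'
    have := H t ht'
    rw [show ∑ v ∈ range t, (cnt n (MOf n π) (v+1) : ℤ)
        = ((∑ v ∈ range t, cnt n (MOf n π) (v+1) : ℕ) : ℤ) by push_cast; rfl,
      sum_cnt_MOf n π hπ t ht'] at this
    omega
  · intro H t ht'
    have := H t ht'
    rw [show ∑ v ∈ range t, (cnt n (MOf n π) (v+1) : ℤ)
        = ((∑ v ∈ range t, cnt n (MOf n π) (v+1) : ℕ) : ℤ) by push_cast; rfl,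
      sum_cnt_MOf n π hπ t ht']
    omega

lemma park_zero_notMem (M : Multiset (ZMod (n+1))) (hM : Multiset.card M = n)
    (hp : IsParkM n M) : (0 : ZMod (n+1)) ∉ M := by
  have h1 := sum_cnt_period n M 0
  rw [hM] at h1
  have h2 : ∑ v ∈ range (n+1), cnt n M (0 + v)
      = ∑ v ∈ range n, cnt n M (v + 1) + cnt n M 0 := by
    rw [Finset.sum_range_succ']
    simp
  have h3 := hp n (le_refl n)
  unfold ht at h3
  have h4 : (n : ℤ) ≤ ∑ v ∈ range n, (cnt n M (v+1) : ℤ) := by omega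
  have h5 : ∑ v ∈ range n, (cnt n M (v+1) : ℤ)
      = ((∑ v ∈ range n, cnt n M (v+1) : ℕ) : ℤ) := by push_cast; rfl
  have h6 : cnt n M 0 = 0 := by omega
  unfold cnt at h6
  rw [← Multiset.count_eq_zero] at *
  simpa using h6

lemma park_mem_val (M : Multiset (ZMod (n+1))) (hM : Multiset.card M = n)
    (hp : IsParkM n M) {x : ZMod (n+1)} (hx : x ∈ M) : 1 ≤ x.val ∧ x.val ≤ n := by
  have h0 : x ≠ 0 := fun h => park_zero_notMem n M hM hp (h ▸ hx)
  have h1 : x.val < n + 1 := ZMod.val_lt x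
  have h2 : x.val ≠ 0 := fun h => h0 (by
    have := ZMod.natCast_val (n := n+1) (R := ZMod (n+1)) x
    rw [ZMod.cast_id] at this
    rw [← this, h]; simp)
  omega




lemma card_filter_lt (t : ℕ) (ht : t ≤ n) :
    (univ.filter (fun j : Fin n => (j : ℕ) < t)).card = t := by
  classical
  have : univ.filter (fun j : Fin n => (j : ℕ) < t)
      = (univ : Finset (Fin t)).image (Fin.castLE ht) := by
    ext j
    simp only [mem_filter, mem_univ, true_and, mem_image]
    constructor
    · intro h; exact ⟨⟨j, h⟩, rfl⟩
    · rintro ⟨i, rfl⟩; exact i.isLt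
  rw [this, Finset.card_image_of_injective _ (Fin.castLE_injective ht)]
  simp

lemma ispf_bounds (π : Fin n → ℕ) (h : IsParkingFunction n π) :
    ∀ i, 1 ≤ π i ∧ π i ≤ n := by
  obtain ⟨h1, σ, hmono, hle⟩ := h
  intro i
  refine ⟨h1 i, ?_⟩
  have := hle (σ.symm i)
  simp only [Equiv.apply_symm_apply] at this
  have h2 : ((σ.symm i : Fin n) : ℕ) + 1 ≤ n := (σ.symm i).isLt
  omega

lemma ispf_iff (π : Fin n → ℕ) (hπ : ∀ i, 1 ≤ π i) :
    IsParkingFunction n π ↔ ∀ t ≤ n, t ≤ (univ.filter (fun i => π i ≤ t)).card := by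
  classical
  constructor
  · rintro ⟨h1, σ, hmono, hle⟩ t ht'
    have hsub : (univ.filter (fun j : Fin n => (j : ℕ) < t)).image σ
        ⊆ univ.filter (fun i => π i ≤ t) := by
      intro x hx
      rw [Finset.mem_image] at hx
      obtain ⟨j, hj, rfl⟩ := hx
      rw [mem_filter] at hj ⊢
      refine ⟨mem_univ _, ?_⟩
      have := hle j
      omega
    calc t = (univ.filter (fun j : Fin n => (j : ℕ) < t)).card := (card_filter_lt n t ht').symm
      _ = ((univ.filter (fun j : Fin n => (j : ℕ) < t)).image σ).card :=
          (Finset.card_image_of_injective _ σ.injective).symm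
      _ ≤ _ := Finset.card_le_card hsub
  · intro H
    refine ⟨hπ, Tuple.sort π, Tuple.monotone_sort π, ?_⟩
    intro i
    by_contra hcon
    push_neg at hcon
    -- π (sort i) ≥ i + 2 ; all j ≥ i have π (sort j) > i+1
    set σ := Tuple.sort π
    have hi1 : (i : ℕ) + 1 ≤ n := i.isLt
    have H1 := H ((i : ℕ) + 1) hi1
    -- filter (π ∘ σ ≤ i+1) ⊆ filter (j < i)
    have hsub : (univ.filter (fun j : Fin n => π (σ j) ≤ (i : ℕ) + 1))
        ⊆ univ.filter (fun j : Fin n => (j : ℕ) < (i : ℕ)) := by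
      intro j hj
      rw [mem_filter] at hj ⊢
      refine ⟨mem_univ _, ?_⟩
      by_contra hge
      push_neg at hge
      have hij : i ≤ j := by
        rcases Fin.le_def (a := i) (b := j) with _
        exact Fin.le_def.mpr hge
      have hmono' : (π ∘ σ) i ≤ (π ∘ σ) j := Tuple.monotone_sort π hij
      simp only [Function.comp_apply] at hmono'
      omega
    have hcard : (univ.filter (fun j : Fin n => π (σ j) ≤ (i : ℕ) + 1)).card
        = (univ.filter (fun x : Fin n => π x ≤ (i : ℕ) + 1)).card := by
      apply Finset.card_nbij (i := fun j => σ j)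
      · intro a ha; simp only [Finset.mem_coe, mem_filter] at ha ⊢; exact ⟨mem_univ _, ha.2⟩
      · intro a ha b hb hab; exact σ.injective hab
      · intro b hb
        simp only [Set.mem_image, Finset.mem_coe, mem_filter, mem_univ, true_and] at *
        exact ⟨σ.symm b, by simpa using hb, by simp⟩
    have hle2 : (univ.filter (fun j : Fin n => (j : ℕ) < (i : ℕ))).card = (i : ℕ) :=
      card_filter_lt n i (le_of_lt i.isLt)
    have := Finset.card_le_card hsub
    omega




lemma shiftM_shiftM (c c' : ZMod (n+1)) (M : Multiset (ZMod (n+1))) :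
    shiftM n c (shiftM n c' M) = shiftM n (c' + c) M := by
  unfold shiftM
  rw [Multiset.map_map]
  apply Multiset.map_congr rfl
  intro x _
  simp [add_assoc]

lemma shiftM_zero (M : Multiset (ZMod (n+1))) : shiftM n 0 M = M := by
  unfold shiftM; simp

def fS (i : Fin n) : ZMod (n+1) := (((i : ℕ) + 1 : ℕ) : ZMod (n+1))

lemma fS_val (i : Fin n) : (fS n i).val = (i : ℕ) + 1 :=
  ZMod.val_cast_of_lt (by omega)

lemma fS_injective : Function.Injective (fS n) := by
  intro a b hab
  have := congrArg ZMod.val hab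
  rw [fS_val, fS_val] at this
  exact Fin.ext (by omega)

def cEnum (j : ℕ) (S : Finset (Fin n)) (r : Fin (n - j)) : Fin n :=
  if h : #Sᶜ = n - j then ((Sᶜ.orderIsoOfFin h r : Fin n))
  else ⟨0, Nat.lt_of_lt_of_le r.pos (Nat.sub_le n j)⟩

variable {n}

lemma cEnum_mem {j : ℕ} {S : Finset (Fin n)} (h : #Sᶜ = n - j) (r : Fin (n-j)) :
    cEnum n j S r ∈ Sᶜ := by
  unfold cEnum
  rw [dif_pos h]
  exact (Sᶜ.orderIsoOfFin h r).2

lemma cEnum_inj {j : ℕ} {S : Finset (Fin n)} (h : #Sᶜ = n - j) :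
    Function.Injective (cEnum n j S) := by
  intro a b hab
  unfold cEnum at hab
  rw [dif_pos h, dif_pos h] at hab
  exact (Sᶜ.orderIsoOfFin h).injective (Subtype.ext hab)

lemma cEnum_image {j : ℕ} {S : Finset (Fin n)} (h : #Sᶜ = n - j) :
    univ.image (cEnum n j S) = Sᶜ := by
  classical
  apply Finset.eq_of_subset_of_card_le
  · intro x hx
    rw [Finset.mem_image] at hx
    obtain ⟨r, _, rfl⟩ := hx
    exact cEnum_mem h r
  · rw [h, Finset.card_image_of_injective _ (cEnum_inj h)]
    simp

lemma cEnum_val {j : ℕ} {S : Finset (Fin n)} (h : #Sᶜ = n - j) :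
    Multiset.map (cEnum n j S) univ.val = Sᶜ.val := by
  classical
  rw [← Finset.image_val_of_injOn ((cEnum_inj h).injOn), cEnum_image h]

lemma univ_val_decomp (S : Finset (Fin n)) :
    (univ : Finset (Fin n)).val = S.val + Sᶜ.val := by
  classical
  have h1 : (univ : Finset (Fin n)) = S.disjUnion Sᶜ disjoint_compl_right := by
    rw [Finset.disjUnion_eq_union, Finset.union_compl]
  rw [h1]; rfl

lemma MOf_decomp {j : ℕ} (π : Fin n → ℕ) (S : Finset (Fin n)) (h : #Sᶜ = n - j) :
    MOf n π = Multiset.map (fun i => ((π i : ℕ) : ZMod (n+1))) S.val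
          + Multiset.map (fun r => ((π (cEnum n j S r) : ℕ) : ZMod (n+1))) univ.val := by
  unfold MOf
  rw [univ_val_decomp S, Multiset.map_add]
  congr 1
  rw [← cEnum_val h, Multiset.map_map]
  rfl



/-! ### The sets being counted -/

open scoped Classical in
noncomputable def Q (n : ℕ) : Finset (Fin n → ℕ) :=
  (Fintype.piFinset fun _ : Fin n => Finset.Icc 1 n).filter (fun π => IsParkingFunction n π)

lemma mem_Q {n : ℕ} {π : Fin n → ℕ} : π ∈ Q n ↔ IsParkingFunction n π := by
  classical
  unfold Q
  rw [Finset.mem_filter, Fintype.mem_piFinset]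
  constructor
  · exact fun h => h.2
  · intro h
    exact ⟨fun i => Finset.mem_Icc.2 (ispf_bounds n π h i), h⟩

lemma Q_bounds {n : ℕ} {π : Fin n → ℕ} (h : π ∈ Q n) : ∀ i, 1 ≤ π i ∧ π i ≤ n :=
  ispf_bounds n π (mem_Q.1 h)

lemma Q_park {n : ℕ} {π : Fin n → ℕ} (h : π ∈ Q n) : IsParkM n (MOf n π) := by
  rw [isParkM_MOf_iff n π (Q_bounds h)]
  exact (ispf_iff n π (fun i => (Q_bounds h i).1)).1 (mem_Q.1 h)

lemma park_mem_Q {n : ℕ} {π : Fin n → ℕ} (hb : ∀ i, 1 ≤ π i ∧ π i ≤ n)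
    (hp : IsParkM n (MOf n π)) : π ∈ Q n := by
  rw [mem_Q, ispf_iff n π (fun i => (hb i).1)]
  exact (isParkM_MOf_iff n π hb).1 hp

open scoped Classical in
noncomputable def PairsB (n j : ℕ) : Finset ((Fin n → ℕ) × Finset (Fin n)) :=
  (Q n ×ˢ (univ.powersetCard j)).filter (fun p => ∀ i ∈ p.2, p.1 i = (i : ℕ) + 1)

lemma mem_PairsB {n j : ℕ} {p : (Fin n → ℕ) × Finset (Fin n)} :
    p ∈ PairsB n j ↔ p.1 ∈ Q n ∧ p.2.card = j ∧ ∀ i ∈ p.2, p.1 i = (i : ℕ) + 1 := by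
  classical
  unfold PairsB
  rw [Finset.mem_filter, Finset.mem_product, Finset.mem_powersetCard_univ]
  tauto

/-! ### The shift bijection -/

noncomputable def Theta (n j : ℕ) (p : ((Fin n → ℕ) × Finset (Fin n)) × ZMod (n+1)) :
    Finset (ZMod (n+1)) × (Fin (n - j) → ZMod (n+1)) :=
  (p.1.2.image (fun i => fS n i + p.2),
    fun r => ((p.1.1 (cEnum n j p.1.2 r) : ℕ) : ZMod (n+1)) + p.2)

lemma map_univ_decomp {n : ℕ} {β : Type} {j : ℕ} (g : Fin n → β) (S : Finset (Fin n))
    (h : #Sᶜ = n - j) :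
    Multiset.map g univ.val
      = Multiset.map g S.val + Multiset.map (fun r => g (cEnum n j S r)) univ.val := by
  classical
  rw [univ_val_decomp S, Multiset.map_add]
  congr 1
  rw [← cEnum_val h, Multiset.map_map]
  rfl

lemma fS_add_injective (n : ℕ) (c : ZMod (n+1)) :
    Function.Injective (fun i => fS n i + c) := fun a b hab =>
  fS_injective n (by simpa using add_right_cancel hab)

lemma theta_multiset {n j : ℕ} (π : Fin n → ℕ) (S : Finset (Fin n))
    (hcard : #Sᶜ = n - j) (hfix : ∀ i ∈ S, π i = (i : ℕ) + 1) (c : ZMod (n+1)) :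
    (S.image (fun i => fS n i + c)).val
      + Multiset.map (fun r => ((π (cEnum n j S r) : ℕ) : ZMod (n+1)) + c) univ.val
      = shiftM n c (MOf n π) := by
  classical
  have h1 : (S.image (fun i => fS n i + c)).val
      = Multiset.map (fun i => ((π i : ℕ) : ZMod (n+1)) + c) S.val := by
    rw [Finset.image_val_of_injOn ((fS_add_injective n c).injOn)]
    apply Multiset.map_congr rfl
    intro i hi
    rw [hfix i hi]
    rfl
  rw [h1]
  unfold shiftM MOf
  rw [Multiset.map_map]
  have hcomp : ((fun x => x + c) ∘ fun i : Fin n => ((π i : ℕ) : ZMod (n+1)))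
      = fun i => ((π i : ℕ) : ZMod (n+1)) + c := rfl
  rw [hcomp]
  rw [map_univ_decomp (g := fun i => ((π i : ℕ) : ZMod (n+1)) + c) S hcard]

lemma card_shiftM {n : ℕ} (c : ZMod (n+1)) (M : Multiset (ZMod (n+1))) :
    Multiset.card (shiftM n c M) = Multiset.card M := by
  simp [shiftM]

lemma zmod_val_cast {n : ℕ} (x : ZMod (n+1)) : ((x.val : ℕ) : ZMod (n+1)) = x := by
  have := ZMod.natCast_val (n := n+1) (R := ZMod (n+1)) x
  rwa [ZMod.cast_id] at this

lemma fS_mk_val {n : ℕ} {x : ZMod (n+1)} (h1 : 1 ≤ x.val) (h2 : x.val ≤ n) :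
    fS n ⟨x.val - 1, by omega⟩ = x := by
  unfold fS
  have h3 : ((x.val - 1 : ℕ) : ℕ) + 1 = x.val := by omega
  simp only [h3]
  exact zmod_val_cast x

lemma card_pairs_mul (n j : ℕ) (hj : j ≤ n) :
    (PairsB n j).card * (n+1) = (n+1).choose j * (n+1)^(n-j) := by
  classical
  have hcard : ((PairsB n j) ×ˢ (univ : Finset (ZMod (n+1)))).card
      = (PairsB n j).card * (n+1) := by
    rw [Finset.card_product, Finset.card_univ, ZMod.card]
  have htarget : (((univ : Finset (ZMod (n+1))).powersetCard j)
      ×ˢ Fintype.piFinset (fun _ : Fin (n-j) => (univ : Finset (ZMod (n+1))))).card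
      = (n+1).choose j * (n+1)^(n-j) := by
    rw [Finset.card_product, Finset.card_powersetCard, Finset.card_univ, ZMod.card,
      Fintype.card_piFinset]
    simp [Finset.card_univ, ZMod.card]
  rw [← hcard, ← htarget]
  apply Finset.card_bij (fun p _ => Theta n j p)
  -- maps to
  · rintro ⟨⟨π, S⟩, c⟩ h
    rw [Finset.mem_product] at h
    obtain ⟨hp, -⟩ := h
    rw [mem_PairsB] at hp
    rw [Finset.mem_product]
    constructor
    · rw [Finset.mem_powersetCard_univ]
      show (S.image (fun i => fS n i + c)).card = j
      rw [Finset.card_image_of_injective _ (fS_add_injective n c)]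
      exact hp.2.1
    · simp [Fintype.mem_piFinset]
  -- injective
  · rintro ⟨⟨π, S⟩, c⟩ h1 ⟨⟨π', S'⟩, c'⟩ h2 heq
    rw [Finset.mem_product] at h1 h2
    obtain ⟨hp1, -⟩ := h1
    obtain ⟨hp2, -⟩ := h2
    rw [mem_PairsB] at hp1 hp2
    obtain ⟨hq1, hcS1, hfix1⟩ := hp1
    obtain ⟨hq2, hcS2, hfix2⟩ := hp2
    dsimp only at hq1 hcS1 hfix1 hq2 hcS2 hfix2
    have hSc1 : #Sᶜ = n - j := by rw [Finset.card_compl, hcS1]; simp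
    have hSc2 : #S'ᶜ = n - j := by rw [Finset.card_compl, hcS2]; simp
    have hfst : S.image (fun i => fS n i + c) = S'.image (fun i => fS n i + c') :=
      congrArg Prod.fst heq
    have hsnd : (fun r => ((π (cEnum n j S r) : ℕ) : ZMod (n+1)) + c)
        = (fun r => ((π' (cEnum n j S' r) : ℕ) : ZMod (n+1)) + c') :=
      congrArg Prod.snd heq
    have hmul : shiftM n c (MOf n π) = shiftM n c' (MOf n π') := by
      rw [← theta_multiset π S hSc1 hfix1 c, ← theta_multiset π' S' hSc2 hfix2 c',
        hfst, hsnd]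
    have hcc : c = c' := by
      obtain ⟨c₀, -, huniq⟩ := existsUnique_shift n (MOf n π) (card_MOf n π)
      have hMπ' : shiftM n (c + -c') (MOf n π) = MOf n π' := by
        rw [← shiftM_shiftM, hmul, shiftM_shiftM]
        simp [shiftM_zero]
      have e0 : (0 : ZMod (n+1)) = c₀ :=
        huniq 0 (by show IsParkM n (shiftM n 0 (MOf n π)); rw [shiftM_zero]; exact Q_park hq1)
      have e1 : (c + -c') = c₀ := huniq _
        (by show IsParkM n (shiftM n (c + -c') (MOf n π)); rw [hMπ']; exact Q_park hq2)
      have e2 : c + -c' = 0 := by rw [e1, ← e0]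
      have := add_neg_eq_zero.1 e2
      exact this
    subst hcc
    have hSS : S = S' := Finset.image_injective (fS_add_injective n c) hfst
    subst hSS
    have hππ : π = π' := by
      funext i
      by_cases hiS : i ∈ S
      · rw [hfix1 i hiS, hfix2 i hiS]
      · have hiSc : i ∈ Sᶜ := Finset.mem_compl.2 hiS
        rw [← cEnum_image hSc1] at hiSc
        obtain ⟨r, -, hr⟩ := Finset.mem_image.1 hiSc
        have h3 := congrFun hsnd r
        rw [hr] at h3
        have hcast : ((π i : ℕ) : ZMod (n+1)) = ((π' i : ℕ) : ZMod (n+1)) :=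
          add_right_cancel h3
        have b1 := (Q_bounds hq1 i).2
        have b2 := (Q_bounds hq2 i).2
        have h4 := congrArg ZMod.val hcast
        rw [ZMod.val_cast_of_lt (by omega), ZMod.val_cast_of_lt (by omega)] at h4
        exact h4
    rw [hππ]
  -- surjective
  · rintro ⟨T', b'⟩ hb
    rw [Finset.mem_product, Finset.mem_powersetCard_univ] at hb
    obtain ⟨hT', -⟩ := hb
    set M' : Multiset (ZMod (n+1)) := T'.val + Multiset.map b' univ.val with hM'def
    have hcardT'val : Multiset.card T'.val = j := hT'
    have hcardbval : Multiset.card (Multiset.map b' univ.val) = n - j := by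
      rw [Multiset.card_map]
      simpa using (Finset.card_univ : #(univ : Finset (Fin (n-j))) = _)
    have hcardM' : Multiset.card M' = n := by
      rw [hM'def, Multiset.card_add, hcardT'val, hcardbval]
      omega
    obtain ⟨c₀, hc₀, -⟩ := existsUnique_shift n M' hcardM'
    set T₀ : Finset (ZMod (n+1)) := T'.image (· + c₀) with hT₀def
    set b₀ : Fin (n-j) → ZMod (n+1) := fun r => b' r + c₀ with hb₀def
    have haddinj : Function.Injective (fun x : ZMod (n+1) => x + c₀) :=
      fun a b hab => by simpa using add_right_cancel hab
    have hcardT₀ : #T₀ = j := by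
      rw [hT₀def, Finset.card_image_of_injective _ haddinj, hT']
    have hM₀ : shiftM n c₀ M' = T₀.val + Multiset.map b₀ univ.val := by
      rw [hM'def]
      unfold shiftM
      rw [Multiset.map_add]
      congr 1
      · rw [hT₀def, Finset.image_val_of_injOn haddinj.injOn]
      · rw [Multiset.map_map]; rfl
    rw [hM₀] at hc₀
    have hcard₀ : Multiset.card (T₀.val + Multiset.map b₀ univ.val) = n := by
      rw [← hM₀, card_shiftM, hcardM']
    have hmemval : ∀ x ∈ T₀.val + Multiset.map b₀ univ.val, 1 ≤ x.val ∧ x.val ≤ n :=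
      fun x hx => park_mem_val n _ hcard₀ hc₀ hx
    set S : Finset (Fin n) := univ.filter (fun i => fS n i ∈ T₀) with hSdef
    have hST₀ : S.image (fS n) = T₀ := by
      apply Finset.Subset.antisymm
      · intro x hx
        rw [Finset.mem_image] at hx
        obtain ⟨i, hi, rfl⟩ := hx
        rw [hSdef, Finset.mem_filter] at hi
        exact hi.2
      · intro x hx
        have hxv := hmemval x (Multiset.mem_add.2 (Or.inl (Finset.mem_val.mpr hx)))
        refine Finset.mem_image.2 ⟨⟨x.val - 1, by omega⟩, ?_, fS_mk_val hxv.1 hxv.2⟩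
        rw [hSdef, Finset.mem_filter]
        exact ⟨Finset.mem_univ _, by rw [fS_mk_val hxv.1 hxv.2]; exact hx⟩
    have hcardS : #S = j := by
      have h5 := Finset.card_image_of_injective S (fS_injective n)
      rw [hST₀] at h5
      omega
    have hSc : #Sᶜ = n - j := by rw [Finset.card_compl, hcardS]; simp
    set π : Fin n → ℕ := fun i =>
      if h : i ∈ S then (i : ℕ) + 1
      else (b₀ ((Sᶜ.orderIsoOfFin hSc).symm ⟨i, Finset.mem_compl.2 h⟩)).val with hπdef
    have hπS : ∀ i ∈ S, π i = (i : ℕ) + 1 := by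
      intro i hi
      simp only [hπdef]
      rw [dif_pos hi]
    have hπenum : ∀ r, π (cEnum n j S r) = (b₀ r).val := by
      intro r
      have hmem : cEnum n j S r ∈ Sᶜ := cEnum_mem hSc r
      have hnot : cEnum n j S r ∉ S := Finset.mem_compl.1 hmem
      simp only [hπdef]
      rw [dif_neg hnot]
      congr 1
      have hce : cEnum n j S r = ((Sᶜ.orderIsoOfFin hSc) r : Fin n) := by
        unfold cEnum; rw [dif_pos hSc]
      have hsub : (⟨cEnum n j S r, Finset.mem_compl.2 hnot⟩ : {x // x ∈ (Sᶜ : Finset (Fin n))})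
          = (Sᶜ.orderIsoOfFin hSc) r := Subtype.ext hce
      rw [hsub]
      exact congrArg b₀ ((Sᶜ.orderIsoOfFin hSc).symm_apply_apply r)
    have hMπ : MOf n π = T₀.val + Multiset.map b₀ univ.val := by
      unfold MOf
      rw [map_univ_decomp (g := fun i => ((π i : ℕ) : ZMod (n+1))) S hSc]
      congr 1
      · rw [← hST₀, Finset.image_val_of_injOn ((fS_injective n).injOn)]
        apply Multiset.map_congr rfl
        intro i hi
        rw [hπS i hi]
        rfl
      · apply Multiset.map_congr rfl
        intro r _
        rw [hπenum r, zmod_val_cast]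
    have hπbounds : ∀ i, 1 ≤ π i ∧ π i ≤ n := by
      intro i
      by_cases h : i ∈ S
      · rw [hπS i h]
        exact ⟨by omega, i.isLt⟩
      · simp only [hπdef]
        rw [dif_neg h]
        apply hmemval
        exact Multiset.mem_add.2 (Or.inr (Multiset.mem_map.2
          ⟨_, Finset.mem_val.mpr (Finset.mem_univ _), rfl⟩))
    have hπQ : π ∈ Q n := park_mem_Q hπbounds (by rw [hMπ]; exact hc₀)
    refine ⟨((π, S), -c₀), ?_, ?_⟩
    · rw [Finset.mem_product]
      exact ⟨mem_PairsB.2 ⟨hπQ, hcardS, hπS⟩, Finset.mem_univ _⟩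
    · unfold Theta
      simp only
      have hfst : S.image (fun i => fS n i + -c₀) = T' := by
        have h6 : S.image (fun i => fS n i + -c₀)
            = (S.image (fS n)).image (fun x => x + -c₀) := by
          rw [Finset.image_image]
          rfl
        rw [h6, hST₀, hT₀def, Finset.image_image]
        ext x
        rw [Finset.mem_image]
        constructor
        · rintro ⟨y, hy, rfl⟩
          simpa using hy
        · intro hx
          exact ⟨x, hx, by simp⟩
      have hsnd : (fun r => ((π (cEnum n j S r) : ℕ) : ZMod (n+1)) + -c₀) = b' := by
        funext r
        rw [hπenum r, zmod_val_cast, hb₀def]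
        simp
      rw [hfst, hsnd]


/-! ### Counting pairs fiberwise -/

open scoped Classical in
noncomputable def fCnt (n k : ℕ) : ℕ :=
  ((Q n).filter (fun π => fixedPointCount n π = k)).card

lemma card_pairs_sum (n j : ℕ) :
    (PairsB n j).card = ∑ k ∈ range (n+1), k.choose j * fCnt n k := by
  classical
  have h1 : (PairsB n j).card
      = ∑ π ∈ Q n, ((univ.filter (fun i : Fin n => π i = (i:ℕ)+1)).powersetCard j).card := by
    rw [Finset.card_eq_sum_card_fiberwise (f := Prod.fst) (t := Q n)
      (fun p hp => (mem_PairsB.1 hp).1)]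
    apply Finset.sum_congr rfl
    intro π hπ
    apply Finset.card_nbij (i := Prod.snd)
    · intro p hp
      rw [Finset.mem_coe, Finset.mem_filter] at hp
      obtain ⟨hp1, hp2⟩ := hp
      rw [mem_PairsB] at hp1
      rw [Finset.mem_coe, Finset.mem_powersetCard]
      constructor
      · intro i hi
        rw [Finset.mem_filter]
        refine ⟨Finset.mem_univ _, ?_⟩
        rw [← hp2]
        exact hp1.2.2 i hi
      · exact hp1.2.1
    · intro p hp q hq hpq
      rw [Finset.mem_coe, Finset.mem_filter] at hp hq
      exact Prod.ext (hp.2.trans hq.2.symm) hpq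
    · intro S hS
      rw [Finset.mem_coe, Finset.mem_powersetCard] at hS
      refine ⟨(π, S), ?_, rfl⟩
      rw [Finset.mem_coe, Finset.mem_filter, mem_PairsB]
      refine ⟨⟨hπ, hS.2, ?_⟩, rfl⟩
      intro i hi
      have := hS.1 hi
      rw [Finset.mem_filter] at this
      exact this.2
  rw [h1]
  have h2 : ∀ π ∈ Q n, ((univ.filter (fun i : Fin n => π i = (i:ℕ)+1)).powersetCard j).card
      = (fixedPointCount n π).choose j := by
    intro π _
    rw [Finset.card_powersetCard]
    rfl
  rw [Finset.sum_congr rfl h2]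
  have hmaps : ∀ π ∈ Q n, fixedPointCount n π ∈ range (n+1) := by
    intro π _
    rw [Finset.mem_range]
    have hle : fixedPointCount n π ≤ #(univ : Finset (Fin n)) :=
      Finset.card_filter_le _ _
    simp only [Finset.card_univ, Fintype.card_fin] at hle
    exact Nat.lt_succ_of_le hle
  have h4 := Finset.sum_fiberwise_of_maps_to hmaps (fun π => (fixedPointCount n π).choose j)
  rw [← h4]
  apply Finset.sum_congr rfl
  intro k _
  have h3 : ∀ π ∈ (Q n).filter (fun π => fixedPointCount n π = k),
      (fixedPointCount n π).choose j = k.choose j := by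
    intro π hπ
    rw [Finset.mem_filter] at hπ
    rw [hπ.2]
  rw [Finset.sum_congr rfl h3, Finset.sum_const, smul_eq_mul]
  rw [mul_comm]
  rfl

/-! ### Binomial inversion -/

lemma delta_sum (n k m : ℕ) (hm : m ≤ n) :
    ∑ j ∈ range (n+1), (-1:ℚ)^(j+k) * (j.choose k) * (m.choose j)
      = if m = k then 1 else 0 := by
  rcases lt_or_ge m k with h | h
  · rw [if_neg (by omega)]
    apply Finset.sum_eq_zero
    intro j hj
    rcases lt_or_ge j k with h2 | h2
    · rw [Nat.choose_eq_zero_of_lt h2]; simp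
    · rw [Nat.choose_eq_zero_of_lt (show m < j by omega)]; simp
  · have hzero : ∀ j ∈ range (n+1), j ∉ Finset.Icc k m →
        (-1:ℚ)^(j+k) * (j.choose k) * (m.choose j) = 0 := by
      intro j hj hj2
      rw [Finset.mem_Icc] at hj2
      push_neg at hj2
      rcases lt_or_ge j k with h2 | h2
      · rw [Nat.choose_eq_zero_of_lt h2]; simp
      · rw [Nat.choose_eq_zero_of_lt (hj2 h2)]; simp
    rw [← Finset.sum_subset
      (fun j hj => by rw [Finset.mem_Icc] at hj; exact Finset.mem_range.2 (by omega)) hzero]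
    rw [← Finset.Ico_add_one_right_eq_Icc, Finset.sum_Ico_eq_sum_range]
    rw [show m + 1 - k = (m - k) + 1 from by omega]
    have hterm : ∀ i ∈ range ((m-k)+1),
        (-1:ℚ)^(k+i+k) * ((k+i).choose k) * (m.choose (k+i))
          = (m.choose k : ℚ) * ((-1:ℚ)^i * ((m-k).choose i)) := by
      intro i hi
      rw [Finset.mem_range] at hi
      have hpow : (-1:ℚ)^(k+i+k) = (-1:ℚ)^i := by
        rw [show k+i+k = 2*k+i from by ring, pow_add, pow_mul, neg_one_sq, one_pow, one_mul]
      have hmul : m.choose (k+i) * (k+i).choose k = m.choose k * (m-k).choose i := by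
        have := Nat.choose_mul (n := m) (show k ≤ k+i by omega)
        rwa [Nat.add_sub_cancel_left] at this
      calc (-1:ℚ)^(k+i+k) * ((k+i).choose k) * (m.choose (k+i))
          = (-1:ℚ)^i * (((m.choose (k+i)) * ((k+i).choose k) : ℕ) : ℚ) := by
            rw [hpow]; push_cast; ring
        _ = (-1:ℚ)^i * (((m.choose k) * ((m-k).choose i) : ℕ) : ℚ) := by rw [hmul]
        _ = (m.choose k : ℚ) * ((-1:ℚ)^i * ((m-k).choose i)) := by push_cast; ring
    rw [Finset.sum_congr rfl hterm, ← Finset.mul_sum]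
    have halt : ∑ i ∈ range ((m-k)+1), (-1:ℚ)^i * ((m-k).choose i)
        = if m - k = 0 then 1 else 0 := by
      have h1 := Int.alternating_sum_range_choose (n := m-k)
      have h2 : (∑ i ∈ range ((m-k)+1), (-1:ℚ)^i * ((m-k).choose i))
          = (((∑ i ∈ range ((m-k)+1), (-1:ℤ)^i * ((m-k).choose i)) : ℤ) : ℚ) := by
        push_cast; rfl
      rw [h2, h1]
      split_ifs <;> simp
    rw [halt]
    by_cases hmk : m = k
    · subst hmk
      rw [if_pos (by omega), if_pos rfl, Nat.choose_self]
      simp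
    · rw [if_neg (by omega), if_neg hmk, mul_zero]

lemma inversion (n k : ℕ) (hk : k ≤ n) :
    (fCnt n k : ℚ)
      = ∑ j ∈ range (n+1), (-1:ℚ)^(j+k) * (j.choose k) * ((PairsB n j).card : ℚ) := by
  have hsub : ∀ j, ((PairsB n j).card : ℚ)
      = ∑ m ∈ range (n+1), (m.choose j : ℚ) * (fCnt n m : ℚ) := by
    intro j
    rw [card_pairs_sum n j]
    push_cast
    rfl
  symm
  calc ∑ j ∈ range (n+1), (-1:ℚ)^(j+k) * (j.choose k) * ((PairsB n j).card : ℚ)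
      = ∑ j ∈ range (n+1), ∑ m ∈ range (n+1),
          ((-1:ℚ)^(j+k) * (j.choose k) * (m.choose j)) * (fCnt n m : ℚ) := by
        apply Finset.sum_congr rfl
        intro j _
        rw [hsub j, Finset.mul_sum]
        apply Finset.sum_congr rfl
        intro m _
        ring
    _ = ∑ m ∈ range (n+1), (∑ j ∈ range (n+1),
          (-1:ℚ)^(j+k) * (j.choose k) * (m.choose j)) * (fCnt n m : ℚ) := by
        rw [Finset.sum_comm]
        apply Finset.sum_congr rfl
        intro m _
        rw [Finset.sum_mul]
    _ = ∑ m ∈ range (n+1), (if m = k then (1:ℚ) else 0) * (fCnt n m : ℚ) := by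
        apply Finset.sum_congr rfl
        intro m hm
        rw [delta_sum n k m (by rw [Finset.mem_range] at hm; omega)]
    _ = (fCnt n k : ℚ) := by
        rw [Finset.sum_eq_single k]
        · rw [if_pos rfl, one_mul]
        · intro m _ hmk
          rw [if_neg hmk, zero_mul]
        · intro hknot
          exact absurd (Finset.mem_range.2 (by omega)) hknot

/-! ### Final algebra -/

lemma main_count (n k : ℕ) (hk : k ≤ n) :
    (fCnt n k : ℚ) * ((n:ℚ)+1)^2
      = ((n+1).choose k : ℚ) * ((n:ℚ)^(n-k+1) + (-1:ℚ)^(n+k)) := by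
  set A : ℚ := (n:ℚ)+1 with hAdef
  have hA : ∀ j, j ≤ n → ((PairsB n j).card : ℚ) * A ^ 2
      = ((n+1).choose j : ℚ) * A^(n-j+1) := by
    intro j hj
    have h0 := card_pairs_mul n j hj
    have hQA : ((PairsB n j).card : ℚ) * A = ((n+1).choose j : ℚ) * A^(n-j) := by
      rw [hAdef]
      exact_mod_cast h0
    calc ((PairsB n j).card : ℚ) * A^2 = (((PairsB n j).card : ℚ) * A) * A := by ring
      _ = (((n+1).choose j : ℚ) * A^(n-j)) * A := by rw [hQA]
      _ = ((n+1).choose j : ℚ) * A^(n-j+1) := by rw [pow_succ]; ring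
  rw [inversion n k hk, Finset.sum_mul]
  have hstep : ∀ j ∈ range (n+1),
      (-1:ℚ)^(j+k) * (j.choose k) * ((PairsB n j).card : ℚ) * A^2
        = (-1:ℚ)^(j+k) * (j.choose k) * (((n+1).choose j : ℚ) * A^(n-j+1)) := by
    intro j hj
    rw [Finset.mem_range] at hj
    have := hA j (by omega)
    calc (-1:ℚ)^(j+k) * (j.choose k) * ((PairsB n j).card : ℚ) * A^2
        = (-1:ℚ)^(j+k) * (j.choose k) * (((PairsB n j).card : ℚ) * A^2) := by ring
      _ = (-1:ℚ)^(j+k) * (j.choose k) * (((n+1).choose j : ℚ) * A^(n-j+1)) := by rw [this]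
  rw [Finset.sum_congr rfl hstep]
  have hzero : ∀ j ∈ range (n+1), j ∉ Finset.Icc k n →
      (-1:ℚ)^(j+k) * (j.choose k) * (((n+1).choose j : ℚ) * A^(n-j+1)) = 0 := by
    intro j hj hj2
    rw [Finset.mem_range] at hj
    rw [Finset.mem_Icc] at hj2
    push_neg at hj2
    have : j < k := by
      by_contra hge
      push_neg at hge
      have := hj2 hge
      omega
    rw [Nat.choose_eq_zero_of_lt this]
    simp
  rw [← Finset.sum_subset
    (fun j hj => by rw [Finset.mem_Icc] at hj; exact Finset.mem_range.2 (by omega)) hzero]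
  rw [← Finset.Ico_add_one_right_eq_Icc, Finset.sum_Ico_eq_sum_range]
  rw [show n + 1 - k = (n - k) + 1 from by omega]
  set m := n - k with hmdef
  have hterm : ∀ i ∈ range (m+1),
      (-1:ℚ)^(k+i+k) * ((k+i).choose k) * (((n+1).choose (k+i) : ℚ) * A^(n-(k+i)+1))
        = ((n+1).choose k : ℚ) * ((-1:ℚ)^i * ((m+1).choose i) * A^(m+1-i)) := by
    intro i hi
    rw [Finset.mem_range] at hi
    have hpow : (-1:ℚ)^(k+i+k) = (-1:ℚ)^i := by
      rw [show k+i+k = 2*k+i from by ring, pow_add, pow_mul, neg_one_sq, one_pow, one_mul]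
    have hmul : (n+1).choose (k+i) * (k+i).choose k = (n+1).choose k * ((m+1).choose i) := by
      have h5 := Nat.choose_mul (n := n+1) (show k ≤ k+i by omega)
      rw [Nat.add_sub_cancel_left] at h5
      rw [show n+1-k = m+1 from by omega] at h5
      exact h5
    have hexp : n - (k+i) + 1 = m + 1 - i := by omega
    rw [hexp, hpow]
    calc (-1:ℚ)^i * ((k+i).choose k) * (((n+1).choose (k+i) : ℚ) * A^(m+1-i))
        = (-1:ℚ)^i * ((((n+1).choose (k+i)) * ((k+i).choose k) : ℕ) : ℚ) * A^(m+1-i) := by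
          push_cast; ring
      _ = (-1:ℚ)^i * ((((n+1).choose k) * ((m+1).choose i) : ℕ) : ℚ) * A^(m+1-i) := by
          rw [hmul]
      _ = ((n+1).choose k : ℚ) * ((-1:ℚ)^i * ((m+1).choose i) * A^(m+1-i)) := by
          push_cast; ring
  rw [Finset.sum_congr rfl hterm, ← Finset.mul_sum]
  congr 1
  -- remaining : ∑ i ∈ range (m+1), (-1)^i * C(m+1,i) * A^(m+1-i) = n^(n-k+1) + (-1)^(n+k)
  have hbin : ∑ i ∈ range (m+2), (-1:ℚ)^i * ((m+1).choose i) * A^(m+1-i) = (n:ℚ)^(m+1) := by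
    have h6 := add_pow (-1 : ℚ) A (m+1)
    have hxy : (-1 : ℚ) + A = (n : ℚ) := by rw [hAdef]; ring
    rw [hxy] at h6
    rw [h6]
    apply Finset.sum_congr rfl
    intro i _
    ring
  have h7 := Finset.sum_range_succ
    (f := fun i => (-1:ℚ)^i * ((m+1).choose i) * A^(m+1-i)) (m+1)
  rw [hbin] at h7
  have h8 : ((-1:ℚ))^(m+1) * (((m+1).choose (m+1) : ℕ) : ℚ) * A^(m+1-(m+1)) = (-1:ℚ)^(m+1) := by
    rw [Nat.choose_self, Nat.sub_self]
    simp
  rw [h8] at h7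
  have h9 : ∑ i ∈ range (m+1), (-1:ℚ)^i * ((m+1).choose i) * A^(m+1-i)
      = (n:ℚ)^(m+1) - (-1:ℚ)^(m+1) := by linarith
  rw [h9]
  have h10 : (-1:ℚ)^(n+k) = (-1:ℚ)^m := by
    rw [show n + k = 2*k + m from by omega, pow_add, pow_mul, neg_one_sq, one_pow, one_mul]
  have h11 : n - k + 1 = m + 1 := rfl
  rw [h10, h11]
  have h12 : (-1:ℚ)^(m+1) = -(-1:ℚ)^m := by rw [pow_succ]; ring
  rw [h12]
  ring

lemma ncard_eq_fCnt (n k : ℕ) :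
    {π : Fin n → ℕ | IsParkingFunction n π ∧ fixedPointCount n π = k}.ncard = fCnt n k := by
  classical
  have hset : {π : Fin n → ℕ | IsParkingFunction n π ∧ fixedPointCount n π = k}
      = ↑((Q n).filter (fun π => fixedPointCount n π = k)) := by
    ext π
    simp only [Set.mem_setOf_eq, Finset.coe_filter, mem_Q]
  rw [hset, Set.ncard_coe_finset]
  rfl

end PFaux

/-- The number of parking functions of length `n` with exactly `k` fixed points is
`(1/(n+1)^2) · C(n+1,k) · (n^(n-k+1) + (-1)^(n+k))`. -/
theorem card_parkingFunctions_fixedPoints (n k : ℕ) (hk : k ≤ n) :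
    (Set.ncard {π : Fin n → ℕ | IsParkingFunction n π ∧ fixedPointCount n π = k} : ℚ) =
      (1 / ((n : ℚ) + 1) ^ 2) * ((n + 1).choose k : ℚ) *
        ((n : ℚ) ^ (n - k + 1) + (-1 : ℚ) ^ (n + k)) := by
  rw [PFaux.ncard_eq_fCnt n k]
  have h2 := PFaux.main_count n k hk
  have hA : ((n:ℚ)+1) ≠ 0 := by positivity
  field_simp at h2 ⊢
  linear_combination h2
end

section
/- The number of parking functions of length n with no fixed points equals (n^(n+1) + (-1)^n)/(n+1)^2. -/
open Finset

namespace PFAux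

/-- counting characterization of parking functions -/
def NPark (n : ℕ) (π : Fin n → ℕ) : Prop :=
  (∀ i, 1 ≤ π i) ∧ ∀ t ∈ Finset.Icc 1 n, t ≤ (Finset.univ.filter (fun i => π i ≤ t)).card

lemma card_filter_val_lt (n t : ℕ) (ht : t ≤ n) :
    ((Finset.univ : Finset (Fin n)).filter (fun (j : Fin n) => (j : ℕ) < t)).card = t := by
  have : ((Finset.univ : Finset (Fin n)).filter (fun (j : Fin n) => (j : ℕ) < t)).card
      = (Finset.range t).card := by
    refine Finset.card_bij' (fun (j : Fin n) _ => (j : ℕ))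
      (fun a ha => ⟨a, lt_of_lt_of_le (Finset.mem_range.mp ha) ht⟩)
      (fun j hj => ?_) (fun a ha => ?_) (fun j hj => ?_) (fun a ha => ?_)
    · simpa using (Finset.mem_filter.mp hj).2
    · simp only [Finset.mem_filter, Finset.mem_univ, true_and]
      exact Finset.mem_range.mp ha
    · simp
    · simp
  simpa [Finset.card_range] using this

lemma card_filter_perm (n t : ℕ) (π : Fin n → ℕ) (σ : Equiv.Perm (Fin n)) :
    ((Finset.univ : Finset (Fin n)).filter (fun i => π i ≤ t)).card
      = ((Finset.univ : Finset (Fin n)).filter (fun j => π (σ j) ≤ t)).card := by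
  refine Finset.card_bij' (fun i _ => σ.symm i) (fun j _ => σ j)
    (fun i hi => ?_) (fun j hj => ?_) (fun i _ => ?_) (fun j _ => ?_)
  · simp only [Finset.mem_filter, Finset.mem_univ, true_and] at hi ⊢
    simpa using hi
  · simp only [Finset.mem_filter, Finset.mem_univ, true_and] at hj ⊢
    simpa using hj
  · simp
  · simp

lemma isParkingFunction_iff_NPark (n : ℕ) (π : Fin n → ℕ) :
    IsParkingFunction n π ↔ NPark n π := by
  constructor
  · rintro ⟨h1, σ, hmono, hle⟩
    refine ⟨h1, fun t ht => ?_⟩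
    rw [Finset.mem_Icc] at ht
    rw [card_filter_perm n t π σ]
    calc t = ((Finset.univ : Finset (Fin n)).filter (fun (j : Fin n) => (j : ℕ) < t)).card :=
            (card_filter_val_lt n t ht.2).symm
      _ ≤ _ := by
            apply Finset.card_le_card
            apply Finset.monotone_filter_right
            intro j _ hj
            exact le_trans (hle j) (by omega)
  · rintro ⟨h1, hcnt⟩
    refine ⟨h1, Tuple.sort π, Tuple.monotone_sort π, fun j => ?_⟩
    by_contra hc
    push_neg at hc
    set t : ℕ := (j : ℕ) + 1 with htdef
    have htn : t ∈ Finset.Icc 1 n := by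
      rw [Finset.mem_Icc]
      exact ⟨by omega, by have := j.isLt; omega⟩
    have hct := hcnt t htn
    rw [card_filter_perm n t π (Tuple.sort π)] at hct
    have hsub : (Finset.univ : Finset (Fin n)).filter (fun i => π (Tuple.sort π i) ≤ t)
        ⊆ (Finset.univ : Finset (Fin n)).filter (fun i => (i : ℕ) < (j : ℕ)) := by
      intro i hi
      simp only [Finset.mem_filter, Finset.mem_univ, true_and] at hi ⊢
      by_contra hij
      push_neg at hij
      have hji : j ≤ i := by rwa [Fin.le_def]
      have := Tuple.monotone_sort π hji
      simp only [Function.comp] at this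
      omega
    have := Finset.card_le_card hsub
    rw [card_filter_val_lt n (j : ℕ) (le_of_lt j.isLt)] at this
    omega



/-- multiset of values of a `ZMod (n+1)`-vector -/
def MV (n : ℕ) (w : Fin n → ZMod (n+1)) : Multiset (ZMod (n+1)) :=
  Multiset.map w Finset.univ.val

/-- circular parking predicate on multisets of size n -/
def CPark (n : ℕ) (s : Multiset (ZMod (n+1))) : Prop :=
  (∀ z ∈ s, z ≠ 0) ∧ ∀ t ∈ Finset.Icc 1 n, t ≤ s.countP (fun z => z.val ≤ t)

instance (n : ℕ) (s : Multiset (ZMod (n+1))) : Decidable (CPark n s) := by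
  unfold CPark; infer_instance


lemma countP_MV (n : ℕ) (w : Fin n → ZMod (n+1)) (p : ZMod (n+1) → Prop) [DecidablePred p] :
    (MV n w).countP p = (Finset.univ.filter (fun i => p (w i))).card := by
  rw [MV, Multiset.countP_map]
  rfl

lemma mem_MV (n : ℕ) (w : Fin n → ZMod (n+1)) (z : ZMod (n+1)) :
    z ∈ MV n w ↔ ∃ i, w i = z := by
  simp [MV, Multiset.mem_map, List.mem_ofFn]

lemma NPark_val_iff (n : ℕ) (w : Fin n → ZMod (n+1)) :
    NPark n (fun i => (w i).val) ↔ CPark n (MV n w) := by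
  unfold NPark CPark
  constructor
  · rintro ⟨h1, h2⟩
    constructor
    · intro z hz
      obtain ⟨i, rfl⟩ := (mem_MV n w z).mp hz
      intro h0
      have h1i : 1 ≤ (w i).val := h1 i
      rw [h0] at h1i
      simp [ZMod.val_zero] at h1i
    · intro t ht
      rw [countP_MV]
      exact h2 t ht
  · rintro ⟨h1, h2⟩
    constructor
    · intro i
      have : w i ≠ 0 := h1 (w i) ((mem_MV n w (w i)).mpr ⟨i, rfl⟩)
      have hv : (w i).val ≠ 0 := fun h => this (by rwa [ZMod.val_eq_zero] at h)
      show 1 ≤ (w i).val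
      omega
    · intro t ht
      have := h2 t ht
      rwa [countP_MV] at this

lemma nofix_iff (n : ℕ) (w : Fin n → ZMod (n+1)) :
    (∀ i : Fin n, (w i).val ≠ (i : ℕ) + 1) ↔
      (∀ i : Fin n, w i ≠ (((i : ℕ) + 1 : ℕ) : ZMod (n+1))) := by
  apply forall_congr'
  intro i
  have hval : ((((i : ℕ) + 1 : ℕ) : ZMod (n+1))).val = (i : ℕ) + 1 :=
    ZMod.val_cast_of_lt (by have := i.isLt; omega)
  constructor
  · intro h hc; exact h (by rw [hc, hval])
  · intro h hc; exact h (ZMod.val_injective _ (by rw [hval, hc]))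

lemma NPark_le (n : ℕ) (π : Fin n → ℕ) (h : NPark n π) : ∀ i, π i ≤ n := by
  intro i
  rcases Nat.eq_zero_or_pos n with h0 | hpos
  · subst h0; exact i.elim0
  · have hn := h.2 n (Finset.mem_Icc.mpr ⟨hpos, le_refl n⟩)
    have hcard : (Finset.univ.filter (fun i => π i ≤ n)).card = n := by
      have hle : (Finset.univ.filter (fun i => π i ≤ n)).card ≤ n :=
        le_trans (Finset.card_filter_le _ _) (by simp)
      omega
    have huniv : (Finset.univ.filter (fun i => π i ≤ n)) = Finset.univ := by
      apply Finset.eq_univ_of_card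
      simpa using hcard
    have hi : i ∈ Finset.univ.filter (fun i => π i ≤ n) := by
      rw [huniv]; exact Finset.mem_univ i
    exact (Finset.mem_filter.mp hi).2

def PFinset (n : ℕ) : Finset (Fin n → ZMod (n+1)) :=
  Finset.univ.filter
    (fun w => CPark n (MV n w) ∧ ∀ i : Fin n, w i ≠ (((i : ℕ) + 1 : ℕ) : ZMod (n+1)))

lemma val_comp_injective (n : ℕ) :
    Function.Injective (fun (w : Fin n → ZMod (n+1)) => (fun i => (w i).val)) := by
  intro w w' h
  funext i
  exact ZMod.val_injective _ (congrFun h i)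

section Pollak

variable (n : ℕ) (s : Multiset (ZMod (n+1)))

def gam (a : ℕ) : ℕ := s.count ((a : ℕ) : ZMod (n+1))

def psi (r : ℕ) : ℤ := ((∑ j ∈ Finset.range r, gam n s j : ℕ) : ℤ) - (r : ℤ)

lemma sum_count_univ : ∑ z ∈ Finset.univ, s.count z = Multiset.card s := by
  rw [← Multiset.toFinset_sum_count_eq s]
  exact (Finset.sum_subset (Finset.subset_univ _)
    (fun z _ hz => Multiset.count_eq_zero_of_notMem (by simpa using hz))).symm

lemma cast_val_eq (a : ZMod (n+1)) : ((a.val : ℕ) : ZMod (n+1)) = a := by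
  rw [ZMod.natCast_val, ZMod.cast_id]

lemma sum_gam_block (hs : Multiset.card s = n) (a : ℕ) : ∑ j ∈ Finset.range (n+1), gam n s (a + j) = n := by
  have main : ∑ j ∈ Finset.range (n+1), gam n s (a + j) = ∑ z ∈ Finset.univ, s.count z := by
    refine Finset.sum_nbij' (i := fun j => (((a + j : ℕ)) : ZMod (n+1)))
      (j := fun z => (z - ((a : ℕ) : ZMod (n+1))).val) ?_ ?_ ?_ ?_ ?_
    · intro j _; exact Finset.mem_univ _
    · intro z _; exact Finset.mem_range.mpr (ZMod.val_lt _)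
    · intro j hj
      have hj' := Finset.mem_range.mp hj
      push_cast
      rw [add_sub_cancel_left]
      exact ZMod.val_cast_of_lt hj'
    · intro z _
      push_cast
      rw [ZMod.natCast_val, ZMod.cast_id]
      ring
    · exact fun j _ => rfl
  rw [main, sum_count_univ, hs]

lemma psi_period (hs : Multiset.card s = n) (r : ℕ) : psi n s (r + (n+1)) = psi n s r - 1 := by
  unfold psi
  rw [Finset.sum_range_add, sum_gam_block n s hs]
  push_cast
  ring

lemma psi_succ (r : ℕ) : psi n s (r + 1) = psi n s r + gam n s r - 1 := by
  unfold psi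
  rw [Finset.sum_range_succ]
  push_cast
  ring

lemma countP_eq_sum_count (p : ZMod (n+1) → Prop) [DecidablePred p] :
    s.countP p = ∑ z ∈ Finset.univ.filter p, s.count z := by
  rw [Multiset.countP_eq_card_filter, ← sum_count_univ]
  rw [Finset.sum_filter]
  apply Finset.sum_congr rfl
  intro z _
  rw [Multiset.count_filter]

lemma psi_bridge (C t : ℕ) :
    psi n s (C + 1 + t) - psi n s (C + 1)
      = ((∑ v ∈ Finset.range t, gam n s (C + 1 + v) : ℕ) : ℤ) - (t : ℤ) := by
  unfold psi
  rw [Finset.sum_range_add]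
  push_cast
  ring

lemma cpark_shift_iff (hs : Multiset.card s = n) (c : ZMod (n+1)) :
    CPark n (s.map (· + c)) ↔
      ∀ r ∈ Finset.Icc ((-c).val + 1) ((-c).val + 1 + n),
        psi n s ((-c).val + 1) ≤ psi n s r := by
  set C := (-c).val with hC
  have hcastC : ((C : ℕ) : ZMod (n+1)) = -c := cast_val_eq n (-c)
  -- first conjunct
  have h0 : (∀ z ∈ s.map (· + c), z ≠ 0) ↔ gam n s C = 0 := by
    rw [show (∀ z ∈ s.map (· + c), z ≠ 0) ↔ (0 : ZMod (n+1)) ∉ s.map (· + c) from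
      ⟨fun h h0 => h 0 h0 rfl, fun h z hz hz0 => h (hz0 ▸ hz)⟩]
    rw [← Multiset.count_eq_zero]
    unfold gam
    rw [hcastC]
    have : (0 : ZMod (n+1)) = (-c) + c := by ring
    rw [this, Multiset.count_map_eq_count' _ _ (add_left_injective c)]
  -- counting conjunct
  have hcnt : ∀ t, t ≤ n →
      (s.map (· + c)).countP (fun z => z.val ≤ t)
        = gam n s C + ∑ v ∈ Finset.range t, gam n s (C + 1 + v) := by
    intro t ht
    have h1 : (s.map (· + c)).countP (fun z => z.val ≤ t)
        = s.countP (fun z => (z + c).val ≤ t) := by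
      rw [Multiset.countP_map, Multiset.countP_eq_card_filter]
    rw [h1, countP_eq_sum_count]
    have h2 : ∑ z ∈ Finset.univ.filter (fun z => (z + c).val ≤ t), s.count z
        = ∑ v ∈ Finset.range (t + 1), gam n s (C + v) := by
      refine (Finset.sum_nbij' (i := fun v => (((v : ℕ)) : ZMod (n+1)) - c)
        (j := fun z => (z + c).val) ?_ ?_ ?_ ?_ ?_).symm
      · intro v hv
        have hv' := Finset.mem_range.mp hv
        simp only [Finset.mem_filter, Finset.mem_univ, true_and]
        show ((((v : ℕ) : ZMod (n+1)) - c) + c).val ≤ t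
        rw [sub_add_cancel]
        rw [ZMod.val_cast_of_lt (by omega)]
        omega
      · intro z hz
        simp only [Finset.mem_filter, Finset.mem_univ, true_and] at hz
        show (z + c).val ∈ Finset.range (t + 1)
        exact Finset.mem_range.mpr (by omega)
      · intro v hv
        have hv' := Finset.mem_range.mp hv
        show ((((v : ℕ) : ZMod (n+1)) - c) + c).val = v
        rw [sub_add_cancel, ZMod.val_cast_of_lt (by omega)]
      · intro z _
        show ((((z + c).val : ℕ) : ZMod (n+1)) - c) = z
        rw [ZMod.natCast_val, ZMod.cast_id, add_sub_cancel_right]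
      · intro v _
        show gam n s (C + v) = s.count (((v : ℕ) : ZMod (n+1)) - c)
        unfold gam
        congr 1
        push_cast
        rw [hcastC]
        ring
    rw [h2, Finset.sum_range_succ']
    have h3 : ∀ v, gam n s (C + (v + 1)) = gam n s (C + 1 + v) := by
      intro v; congr 1; omega
    rw [Finset.sum_congr rfl (fun v _ => h3 v)]
    simp [add_comm]
  constructor
  · rintro ⟨hz, hcond⟩ r hr
    rw [Finset.mem_Icc] at hr
    obtain ⟨hr1, hr2⟩ := hr
    set t := r - (C + 1) with htdef
    have hrt : r = C + 1 + t := by omega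
    have htn : t ≤ n := by omega
    rcases Nat.eq_zero_or_pos t with ht0 | htpos
    · rw [hrt, ht0]
    · have hcnd := hcond t (Finset.mem_Icc.mpr ⟨htpos, htn⟩)
      rw [hcnt t htn] at hcnd
      have hgam0 : gam n s C = 0 := h0.mp hz
      rw [hgam0, zero_add] at hcnd
      have := psi_bridge n s C t
      rw [hrt]
      omega
  · intro hw
    have hgam0 : gam n s C = 0 := by
      have h1 := hw (C + 1 + n) (Finset.mem_Icc.mpr ⟨by omega, le_refl _⟩)
      have h2 : psi n s (C + 1 + n) = psi n s C - 1 := by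
        rw [show C + 1 + n = C + (n + 1) from by omega]
        exact psi_period n s hs C
      have h3 := psi_succ n s C
      omega
    constructor
    · exact h0.mpr hgam0
    · intro t ht
      rw [Finset.mem_Icc] at ht
      rw [hcnt t ht.2, hgam0, zero_add]
      have h1 := hw (C + 1 + t) (Finset.mem_Icc.mpr ⟨by omega, by omega⟩)
      have := psi_bridge n s C t
      omega

theorem pollak (hs : Multiset.card s = n) : ∃! c : ZMod (n+1), CPark n (s.map (· + c)) := by
  -- window predicate
  have hWiff : ∀ c : ZMod (n+1), CPark n (s.map (· + c)) ↔
      ∀ r ∈ Finset.Icc ((-c).val + 1) ((-c).val + 1 + n),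
        psi n s ((-c).val + 1) ≤ psi n s r := fun c => cpark_shift_iff n s hs c
  -- existence of a smallest argmin on [1, n+1]
  obtain ⟨u₁, hu₁T, hu₁min⟩ := Finset.exists_min_image (Finset.Icc 1 (n+1)) (psi n s)
    ⟨1, Finset.mem_Icc.mpr ⟨le_refl 1, by omega⟩⟩
  letI : DecidablePred (fun u : ℕ => ∀ v ∈ Finset.Icc 1 (n+1), psi n s u ≤ psi n s v) :=
    fun u => Finset.decidableDforallFinset
  set A := (Finset.Icc 1 (n+1)).filter (fun u => ∀ v ∈ Finset.Icc 1 (n+1), psi n s u ≤ psi n s v)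
    with hA
  have hAne : A.Nonempty := ⟨u₁, Finset.mem_filter.mpr ⟨hu₁T, hu₁min⟩⟩
  set u₀ := A.min' hAne with hu₀
  have hu₀A : u₀ ∈ A := Finset.min'_mem A hAne
  obtain ⟨hu₀T, hu₀min⟩ := Finset.mem_filter.mp hu₀A
  rw [Finset.mem_Icc] at hu₀T
  have hstrict : ∀ v ∈ Finset.Icc 1 (n+1), v < u₀ → psi n s u₀ < psi n s v := by
    intro v hv hvlt
    by_contra hcon
    push_neg at hcon
    have hvA : v ∈ A := Finset.mem_filter.mpr ⟨hv, fun z hz =>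
      le_trans hcon (hu₀min z hz)⟩
    exact absurd (Finset.min'_le A v hvA) (by omega)
  -- the good C
  set C := u₀ - 1 with hCdef
  have hCu : C + 1 = u₀ := by omega
  have hClt : C < n + 1 := by omega
  have hW : ∀ r ∈ Finset.Icc (C + 1) (C + 1 + n), psi n s (C + 1) ≤ psi n s r := by
    intro r hr
    rw [Finset.mem_Icc] at hr
    rcases le_or_gt r (n+1) with hrle | hrgt
    · rw [hCu]
      exact hu₀min r (Finset.mem_Icc.mpr ⟨by omega, hrle⟩)
    · have hv : r - (n+1) ∈ Finset.Icc 1 (n+1) := Finset.mem_Icc.mpr ⟨by omega, by omega⟩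
      have hvlt : r - (n+1) < u₀ := by omega
      have := hstrict _ hv hvlt
      have hper : psi n s ((r - (n+1)) + (n+1)) = psi n s (r - (n+1)) - 1 :=
        psi_period n s hs _
      rw [show (r - (n+1)) + (n+1) = r from by omega] at hper
      rw [hCu]
      omega
  -- conclude existence
  refine ⟨-((C : ℕ) : ZMod (n+1)), ?_, ?_⟩
  · show CPark n (Multiset.map (fun x => x + (-((C : ℕ) : ZMod (n+1)))) s)
    rw [hWiff]
    have : (-(-((C : ℕ) : ZMod (n+1)))).val = C := by
      rw [neg_neg]
      exact ZMod.val_cast_of_lt hClt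
    rw [this]
    exact hW
  · intro c' hc'
    rw [hWiff] at hc'
    set C' := (-c').val with hC'
    have hC'lt : C' < n + 1 := ZMod.val_lt _
    -- uniqueness: show C' = C
    have key : ∀ (D D' : ℕ), D < D' → D' < n + 1 →
        (∀ r ∈ Finset.Icc (D + 1) (D + 1 + n), psi n s (D + 1) ≤ psi n s r) →
        (∀ r ∈ Finset.Icc (D' + 1) (D' + 1 + n), psi n s (D' + 1) ≤ psi n s r) →
        False := by
      intro D D' hDD' hD'lt hWD hWD'
      have h1 : psi n s (D + 1) ≤ psi n s (D' + 1) :=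
        hWD (D' + 1) (Finset.mem_Icc.mpr ⟨by omega, by omega⟩)
      have h2 : psi n s (D' + 1) ≤ psi n s ((D + 1) + (n + 1)) :=
        hWD' ((D + 1) + (n + 1)) (Finset.mem_Icc.mpr ⟨by omega, by omega⟩)
      have h3 : psi n s ((D + 1) + (n + 1)) = psi n s (D + 1) - 1 := psi_period n s hs _
      omega
    have hCC' : C' = C := by
      rcases lt_trichotomy C' C with h | h | h
      · exact absurd (key C' C h hClt hc' hW) (fun x => x)
      · exact h
      · exact absurd (key C C' h hC'lt hW hc') (fun x => x)
    -- conclude c' = -C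
    have : -c' = ((C : ℕ) : ZMod (n+1)) := by
      rw [← hCC']
      exact (cast_val_eq n (-c')).symm
    rw [← this, neg_neg]

end Pollak




section Bij

variable (n : ℕ)

/-- the "fixed point" positions of `w` -/
def fixSet (w : Fin n → ZMod (n+1)) : Finset (Fin n) :=
  Finset.univ.filter (fun i => w i = (((i : ℕ) + 1 : ℕ) : ZMod (n+1)))

lemma posval_inj : Function.Injective (fun i : Fin n => (((i : ℕ) + 1 : ℕ) : ZMod (n+1))) := by
  intro i j h
  have hi : ((((i : ℕ) + 1 : ℕ) : ZMod (n+1))).val = (i : ℕ) + 1 :=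
    ZMod.val_cast_of_lt (by have := i.isLt; omega)
  have hj : ((((j : ℕ) + 1 : ℕ) : ZMod (n+1))).val = (j : ℕ) + 1 :=
    ZMod.val_cast_of_lt (by have := j.isLt; omega)
  have h' : ((((i : ℕ) + 1 : ℕ)) : ZMod (n+1)) = ((((j : ℕ) + 1 : ℕ)) : ZMod (n+1)) := h
  have hv := congrArg ZMod.val h'
  rw [hi, hj] at hv
  exact Fin.ext (by omega)

lemma posval_add_inj (c : ZMod (n+1)) :
    Function.Injective (fun i : Fin n => (((i : ℕ) + 1 : ℕ) : ZMod (n+1)) + c) := by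
  intro i j h
  exact posval_inj n (by simpa using add_right_cancel h)

/-- embedding of `Fin (n-k)` onto the complement of `I` -/
def femb (I : Finset (Fin n)) {k : ℕ} (h : Iᶜ.card = n - k) : Fin (n - k) ↪ Fin n :=
  ⟨fun j => ((Iᶜ.orderIsoOfFin h) j : Fin n), by
    intro a b hab
    have : (Iᶜ.orderIsoOfFin h) a = (Iᶜ.orderIsoOfFin h) b := Subtype.ext hab
    exact (Iᶜ.orderIsoOfFin h).injective this⟩

lemma femb_mem (I : Finset (Fin n)) {k : ℕ} (h : Iᶜ.card = n - k) (j : Fin (n - k)) :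
    femb n I h j ∈ Iᶜ := ((Iᶜ.orderIsoOfFin h) j).2

lemma femb_map_univ (I : Finset (Fin n)) {k : ℕ} (h : Iᶜ.card = n - k) :
    Finset.map (femb n I h) Finset.univ = Iᶜ := by
  apply Finset.eq_of_subset_of_card_le
  · intro a ha
    obtain ⟨j, _, rfl⟩ := Finset.mem_map.mp ha
    exact femb_mem n I h j
  · rw [Finset.card_map, h, Finset.card_univ]
    simp

lemma univ_filter_mem (I : Finset (Fin n)) :
    Finset.univ.filter (fun i => i ∈ I) = I := by
  ext i; simp

lemma MV_split (w : Fin n → ZMod (n+1)) (I : Finset (Fin n)) :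
    MV n w = Multiset.map w I.val + Multiset.map w Iᶜ.val := by
  unfold MV
  rw [← Multiset.map_add]
  congr 1
  have h1 : I.val = Multiset.filter (fun i => i ∈ I) Finset.univ.val := by
    conv_lhs => rw [← univ_filter_mem n I]
    rfl
  have h2 : Iᶜ.val = Multiset.filter (fun i => ¬ i ∈ I) Finset.univ.val := by
    have : Iᶜ = Finset.univ.filter (fun i => ¬ i ∈ I) := by ext i; simp
    rw [this]
    rfl
  rw [h1, h2, Multiset.filter_add_not]

lemma map_I_of_fix (w : Fin n → ZMod (n+1)) (I : Finset (Fin n)) (hfix : I ⊆ fixSet n w) :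
    Multiset.map w I.val = Multiset.map (fun i : Fin n => (((i : ℕ) + 1 : ℕ) : ZMod (n+1))) I.val := by
  apply Multiset.map_congr rfl
  intro i hi
  have : i ∈ fixSet n w := hfix hi
  exact (Finset.mem_filter.mp this).2

lemma image_posval_val (I : Finset (Fin n)) (c : ZMod (n+1)) :
    (I.image (fun (i : Fin n) => (((i : ℕ) + 1 : ℕ) : ZMod (n+1)) + c)).val
      = I.val.map (fun (i : Fin n) => (((i : ℕ) + 1 : ℕ) : ZMod (n+1)) + c) :=
  Finset.image_val_of_injOn ((posval_add_inj n c).injOn)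

lemma card_image_posval (I : Finset (Fin n)) (c : ZMod (n+1)) :
    (I.image (fun (i : Fin n) => (((i : ℕ) + 1 : ℕ) : ZMod (n+1)) + c)).card = I.card :=
  Finset.card_image_of_injOn ((posval_add_inj n c).injOn)

lemma map_Ic (w : Fin n → ZMod (n+1)) (I : Finset (Fin n)) {k : ℕ} (h : Iᶜ.card = n - k) :
    Multiset.map w Iᶜ.val = Multiset.map (fun j => w (femb n I h j)) Finset.univ.val := by
  rw [← femb_map_univ n I h, Finset.map_val, Multiset.map_map]
  rfl

end Bij

section Main
variable (n : ℕ)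

def AkP (k : ℕ) (p : (Fin n → ZMod (n+1)) × Finset (Fin n)) : Prop :=
  CPark n (MV n p.1) ∧ p.2 ⊆ fixSet n p.1 ∧ p.2.card = k

instance (k : ℕ) (p : (Fin n → ZMod (n+1)) × Finset (Fin n)) : Decidable (AkP n k p) := by
  unfold AkP; infer_instance

abbrev AkT (k : ℕ) := {p : (Fin n → ZMod (n+1)) × Finset (Fin n) // AkP n k p}

abbrev BkT (k : ℕ) := {V : Finset (ZMod (n+1)) // V.card = k} × (Fin (n - k) → ZMod (n+1))

lemma compl_card {k : ℕ} (q : ZMod (n+1) × AkT n k) : (q.2.1.2)ᶜ.card = n - k := by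
  rw [Finset.card_compl, q.2.2.2.2]
  simp

def Fmap (k : ℕ) (q : ZMod (n+1) × AkT n k) : BkT n k :=
  ⟨⟨(q.2.1.2).image (fun (i : Fin n) => (((i : ℕ) + 1 : ℕ) : ZMod (n+1)) + q.1),
      by rw [card_image_posval]; exact q.2.2.2.2⟩,
    fun j => q.2.1.1 (femb n q.2.1.2 (compl_card n q) j) + q.1⟩

lemma card_MV (w : Fin n → ZMod (n+1)) : Multiset.card (MV n w) = n := by
  unfold MV
  rw [Multiset.card_map]
  simp

lemma MV_map_shift_back (w : Fin n → ZMod (n+1)) (c : ZMod (n+1)) :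
    ((MV n w).map (· + c)).map (· + (-c)) = MV n w := by
  rw [Multiset.map_map]
  have : ((fun z => z + (-c)) ∘ (fun z => z + c)) = id := by
    funext z; simp
  rw [this, Multiset.map_id]

lemma scanon_eq (k : ℕ) (q : ZMod (n+1) × AkT n k) :
    Multiset.map ((Fmap n k q).2) Finset.univ.val + ((Fmap n k q).1 : Finset (ZMod (n+1))).val
      = (MV n q.2.1.1).map (· + q.1) := by
  obtain ⟨c, ⟨⟨w, I⟩, hP, hfix, hcard⟩⟩ := q
  have hIc : Iᶜ.card = n - k := by
    rw [Finset.card_compl]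
    simp only [hcard, Finset.card_univ, Fintype.card_fin]
  show Multiset.map (fun j => w (femb n I hIc j) + c) Finset.univ.val
      + (I.image (fun (i : Fin n) => (((i : ℕ) + 1 : ℕ) : ZMod (n+1)) + c)).val
      = (MV n w).map (· + c)
  rw [MV_split n w I, Multiset.map_add]
  rw [image_posval_val]
  have h1 : Multiset.map (fun j => w (femb n I hIc j) + c) Finset.univ.val
      = (Multiset.map w Iᶜ.val).map (· + c) := by
    rw [map_Ic n w I hIc, Multiset.map_map]
    rfl
  have h2 : I.val.map (fun (i : Fin n) => (((i : ℕ) + 1 : ℕ) : ZMod (n+1)) + c)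
      = (Multiset.map w I.val).map (· + c) := by
    rw [map_I_of_fix n w I hfix, Multiset.map_map]
    rfl
  rw [h1, h2]
  exact add_comm _ _

lemma Fmap_injective (k : ℕ) : Function.Injective (Fmap n k) := by
  intro q₁ q₂ heq
  obtain ⟨c₁, ⟨⟨w₁, I₁⟩, hP₁, hfix₁, hcard₁⟩⟩ := q₁
  obtain ⟨c₂, ⟨⟨w₂, I₂⟩, hP₂, hfix₂, hcard₂⟩⟩ := q₂
  have hs₁ := scanon_eq n k (c₁, ⟨(w₁, I₁), hP₁, hfix₁, hcard₁⟩)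
  have hs₂ := scanon_eq n k (c₂, ⟨(w₂, I₂), hP₂, hfix₂, hcard₂⟩)
  rw [heq] at hs₁
  have hss : (MV n w₁).map (· + c₁) = (MV n w₂).map (· + c₂) := by
    have := hs₁.symm.trans hs₂
    dsimp only at this
    exact this
  have hscard : Multiset.card ((MV n w₂).map (· + c₂)) = n := by
    rw [Multiset.card_map, card_MV]
  have hc₁ : CPark n (((MV n w₂).map (· + c₂)).map (· + (-c₁))) := by
    rw [← hss, MV_map_shift_back]
    exact hP₁
  have hc₂ : CPark n (((MV n w₂).map (· + c₂)).map (· + (-c₂))) := by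
    rw [MV_map_shift_back]
    exact hP₂
  have hcc : (-c₁) = (-c₂) := (pollak n _ hscard).unique hc₁ hc₂
  have hc : c₁ = c₂ := by
    have := congrArg Neg.neg hcc
    simpa using this
  subst hc
  have hVeq : I₁.image (fun (i : Fin n) => (((i : ℕ) + 1 : ℕ) : ZMod (n+1)) + c₁)
      = I₂.image (fun (i : Fin n) => (((i : ℕ) + 1 : ℕ) : ZMod (n+1)) + c₁) :=
    congrArg (fun b : BkT n k => (b.1 : Finset (ZMod (n+1)))) heq
  have hI : I₁ = I₂ := by
    ext i
    constructor
    · intro hi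
      have hmem : (fun (i : Fin n) => (((i : ℕ) + 1 : ℕ) : ZMod (n+1)) + c₁) i ∈
          I₂.image (fun (i : Fin n) => (((i : ℕ) + 1 : ℕ) : ZMod (n+1)) + c₁) := by
        rw [← hVeq]; exact Finset.mem_image_of_mem _ hi
      obtain ⟨i', hi', hii⟩ := Finset.mem_image.mp hmem
      rwa [← posval_add_inj n c₁ hii]
    · intro hi
      have hmem : (fun (i : Fin n) => (((i : ℕ) + 1 : ℕ) : ZMod (n+1)) + c₁) i ∈
          I₁.image (fun (i : Fin n) => (((i : ℕ) + 1 : ℕ) : ZMod (n+1)) + c₁) := by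
        rw [hVeq]; exact Finset.mem_image_of_mem _ hi
      obtain ⟨i', hi', hii⟩ := Finset.mem_image.mp hmem
      rwa [← posval_add_inj n c₁ hii]
  subst hI
  have hw : w₁ = w₂ := by
    funext i
    by_cases hiI : i ∈ I₁
    · have h1 : w₁ i = (((i : ℕ) + 1 : ℕ) : ZMod (n+1)) := (Finset.mem_filter.mp (hfix₁ hiI)).2
      have h2 : w₂ i = (((i : ℕ) + 1 : ℕ) : ZMod (n+1)) := (Finset.mem_filter.mp (hfix₂ hiI)).2
      exact h1.trans h2.symm
    · have hIc : I₁ᶜ.card = n - k := by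
        rw [Finset.card_compl]
        simp only [hcard₁, Finset.card_univ, Fintype.card_fin]
      have hiIc : i ∈ Finset.map (femb n I₁ hIc) Finset.univ := by
        rw [femb_map_univ n I₁ hIc]
        exact Finset.mem_compl.mpr hiI
      obtain ⟨j, _, hj⟩ := Finset.mem_map.mp hiIc
      have hx := congrFun (congrArg (fun b : BkT n k => b.2) heq) j
      dsimp only [Fmap] at hx
      have hx' : w₁ (femb n I₁ hIc j) = w₂ (femb n I₁ hIc j) := add_right_cancel hx
      rw [← hj]
      exact hx'
  subst hw
  rfl

lemma Fmap_surjective (k : ℕ) (hk : k ≤ n) : Function.Surjective (Fmap n k) := by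
  rintro ⟨⟨V, hV⟩, x⟩
  set s : Multiset (ZMod (n+1)) := Multiset.map x Finset.univ.val + V.val with hsdef
  have hscard : Multiset.card s = n := by
    have h1 : Multiset.card s = (n - k) + k := by
      rw [hsdef, Multiset.card_add, Multiset.card_map]
      simp [← Finset.card_def, hV]
    omega
  obtain ⟨c', hc', huniq⟩ := pollak n s hscard
  have hV0 : ∀ v ∈ V, v + c' ≠ 0 := by
    intro v hv
    apply hc'.1 (v + c')
    apply Multiset.mem_map_of_mem
    rw [hsdef]
    exact Multiset.mem_add.mpr (Or.inr hv)
  set c : ZMod (n+1) := -c' with hcdef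
  set I : Finset (Fin n) :=
    Finset.univ.filter (fun i : Fin n => (((i : ℕ) + 1 : ℕ) : ZMod (n+1)) + c ∈ V) with hIdef
  have hIV : I.image (fun (i : Fin n) => (((i : ℕ) + 1 : ℕ) : ZMod (n+1)) + c) = V := by
    apply Finset.Subset.antisymm
    · intro v hv
      obtain ⟨i, hi, rfl⟩ := Finset.mem_image.mp hv
      exact (Finset.mem_filter.mp hi).2
    · intro v hv
      have hne : v - c ≠ 0 := by
        have h := hV0 v hv
        rw [hcdef]
        rwa [sub_neg_eq_add]
      have hval1 : 1 ≤ (v - c).val :=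
        Nat.one_le_iff_ne_zero.mpr (fun h0 => hne ((ZMod.val_eq_zero _).mp h0))
      have hval2 : (v - c).val < n + 1 := ZMod.val_lt _
      refine Finset.mem_image.mpr ⟨⟨(v - c).val - 1, by omega⟩, ?_, ?_⟩
      · refine Finset.mem_filter.mpr ⟨Finset.mem_univ _, ?_⟩
        have hcast : ((((v - c).val - 1 : ℕ) + 1 : ℕ) : ZMod (n+1)) = v - c := by
          rw [show ((v - c).val - 1) + 1 = (v - c).val from by omega]
          exact cast_val_eq n (v - c)
        show ((((v - c).val - 1 : ℕ) + 1 : ℕ) : ZMod (n+1)) + c ∈ V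
        rw [hcast, sub_add_cancel]
        exact hv
      · have hcast : ((((v - c).val - 1 : ℕ) + 1 : ℕ) : ZMod (n+1)) = v - c := by
          rw [show ((v - c).val - 1) + 1 = (v - c).val from by omega]
          exact cast_val_eq n (v - c)
        show ((((v - c).val - 1 : ℕ) + 1 : ℕ) : ZMod (n+1)) + c = v
        rw [hcast, sub_add_cancel]
  have hIcard : I.card = k := by
    have := card_image_posval n I c
    rw [hIV] at this
    rw [← this, hV]
  have hIc : Iᶜ.card = n - k := by
    rw [Finset.card_compl]
    simp only [hIcard, Finset.card_univ, Fintype.card_fin]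
  set w : Fin n → ZMod (n+1) := fun i =>
    if h : i ∈ I then (((i : ℕ) + 1 : ℕ) : ZMod (n+1))
    else x ((Iᶜ.orderIsoOfFin hIc).symm ⟨i, Finset.mem_compl.mpr h⟩) + c' with hwdef
  have hfix : I ⊆ fixSet n w := by
    intro i hi
    refine Finset.mem_filter.mpr ⟨Finset.mem_univ _, ?_⟩
    rw [hwdef]
    exact dif_pos hi
  have hwj : ∀ j : Fin (n - k), w (femb n I hIc j) = x j + c' := by
    intro j
    have hmem : femb n I hIc j ∈ Iᶜ := femb_mem n I hIc j
    have hnot : ¬ femb n I hIc j ∈ I := Finset.mem_compl.mp hmem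
    simp only [hwdef]
    rw [dif_neg hnot]
    congr 1
    have heq : (⟨femb n I hIc j, Finset.mem_compl.mpr hnot⟩ : {a // a ∈ Iᶜ})
        = (Iᶜ.orderIsoOfFin hIc) j := Subtype.ext rfl
    rw [heq, OrderIso.symm_apply_apply]
  have hMV : MV n w = s.map (· + c') := by
    rw [MV_split n w I]
    have hA : Multiset.map w I.val = V.val.map (· + c') := by
      rw [map_I_of_fix n w I hfix]
      rw [← hIV, image_posval_val, Multiset.map_map]
      apply Multiset.map_congr rfl
      intro i _
      show (((i : ℕ) + 1 : ℕ) : ZMod (n+1)) = ((((i : ℕ) + 1 : ℕ) : ZMod (n+1)) + c) + c'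
      rw [hcdef]
      ring
    have hB : Multiset.map w Iᶜ.val = (Multiset.map x Finset.univ.val).map (· + c') := by
      rw [map_Ic n w I hIc, Multiset.map_map]
      apply Multiset.map_congr rfl
      intro j _
      exact hwj j
    rw [hA, hB, hsdef, Multiset.map_add]
    exact add_comm _ _
  have hP : CPark n (MV n w) := by
    rw [hMV]
    exact hc'
  refine ⟨(c, ⟨(w, I), hP, hfix, hIcard⟩), ?_⟩
  have h1 : (Fmap n k (c, ⟨(w, I), hP, hfix, hIcard⟩)).1 = ⟨V, hV⟩ := Subtype.ext hIV
  have h2 : (Fmap n k (c, ⟨(w, I), hP, hfix, hIcard⟩)).2 = x := by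
    funext j
    show w (femb n I (compl_card n (c, ⟨(w, I), hP, hfix, hIcard⟩)) j) + c = x j
    have : w (femb n I hIc j) + c = x j := by
      rw [hwj j, hcdef]
      ring
    exact this
  exact Prod.ext h1 h2

lemma card_eq_AkT (k : ℕ) (hk : k ≤ n) :
    (n+1) * Fintype.card (AkT n k) = (n+1).choose k * (n+1)^(n-k) := by
  have hbij : Function.Bijective (Fmap n k) := ⟨Fmap_injective n k, Fmap_surjective n k hk⟩
  have hcard := Fintype.card_of_bijective hbij
  rw [Fintype.card_prod, ZMod.card] at hcard
  have hcard2 : (n+1) * Fintype.card (AkT n k)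
      = Fintype.card ({V : Finset (ZMod (n+1)) // V.card = k} × (Fin (n-k) → ZMod (n+1))) := hcard
  rw [hcard2, Fintype.card_prod]
  have h1 : Fintype.card {V : Finset (ZMod (n+1)) // V.card = k} = (n+1).choose k := by
    rw [Fintype.card_subtype]
    have h2 : (Finset.univ.filter (fun V : Finset (ZMod (n+1)) => V.card = k))
        = Finset.powersetCard k (Finset.univ : Finset (ZMod (n+1))) := by
      rw [Finset.powersetCard_eq_filter, Finset.powerset_univ]
    rw [h2, Finset.card_powersetCard, Finset.card_univ, ZMod.card]
  have h3 : Fintype.card (Fin (n - k) → ZMod (n+1)) = (n+1)^(n-k) := by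
    rw [Fintype.card_fun, ZMod.card, Fintype.card_fin]
  rw [h1, h3]

lemma card_eq_filterk (k : ℕ) :
    ((Finset.univ : Finset ((Fin n → ZMod (n+1)) × Finset (Fin n))).filter
        (fun p => (CPark n (MV n p.1) ∧ p.2 ⊆ fixSet n p.1) ∧ p.2.card = k)).card
      = Fintype.card (AkT n k) := by
  rw [Fintype.card_subtype]
  congr 1
  apply Finset.filter_congr
  intro p _
  unfold AkP
  tauto

lemma PFinset_sum : ((PFinset n).card : ℤ)
    = ∑ p ∈ (Finset.univ : Finset ((Fin n → ZMod (n+1)) × Finset (Fin n))).filter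
        (fun p => CPark n (MV n p.1) ∧ p.2 ⊆ fixSet n p.1), (-1 : ℤ)^(p.2.card) := by
  classical
  rw [Finset.sum_filter]
  rw [Fintype.sum_prod_type]
  have inner : ∀ w : Fin n → ZMod (n+1),
      (∑ I ∈ (Finset.univ : Finset (Finset (Fin n))),
        if CPark n (MV n w) ∧ I ⊆ fixSet n w then (-1 : ℤ)^I.card else 0)
      = if CPark n (MV n w) ∧ fixSet n w = ∅ then 1 else 0 := by
    intro w
    by_cases hP : CPark n (MV n w)
    · simp only [hP, true_and]
      rw [← Finset.sum_filter]
      have hpow : (Finset.univ : Finset (Finset (Fin n))).filter (fun I => I ⊆ fixSet n w)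
          = (fixSet n w).powerset := by
        ext I; simp [Finset.mem_powerset]
      rw [hpow, Finset.sum_powerset_neg_one_pow_card]
    · simp only [hP, false_and, if_false]
      simp
  rw [Finset.sum_congr rfl (fun w _ => inner w)]
  rw [← Finset.sum_filter]
  have hset : (Finset.univ : Finset (Fin n → ZMod (n+1))).filter
      (fun w => CPark n (MV n w) ∧ fixSet n w = ∅) = PFinset n := by
    unfold PFinset
    apply Finset.filter_congr
    intro w _
    constructor
    · rintro ⟨h1, h2⟩
      refine ⟨h1, fun i hi => ?_⟩
      have : i ∈ fixSet n w := Finset.mem_filter.mpr ⟨Finset.mem_univ _, hi⟩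
      rw [h2] at this
      exact absurd this (Finset.notMem_empty i)
    · rintro ⟨h1, h2⟩
      refine ⟨h1, ?_⟩
      rw [Finset.eq_empty_iff_forall_notMem]
      intro i hi
      exact h2 i (Finset.mem_filter.mp hi).2
  rw [hset]
  simp

lemma main_count : ((PFinset n).card : ℤ) * ((n : ℤ)+1)^2 = (n : ℤ)^(n+1) + (-1 : ℤ)^n := by
  classical
  rw [PFinset_sum]
  -- fiberwise by card
  have hfib : ∑ p ∈ (Finset.univ : Finset ((Fin n → ZMod (n+1)) × Finset (Fin n))).filter
        (fun p => CPark n (MV n p.1) ∧ p.2 ⊆ fixSet n p.1), (-1 : ℤ)^(p.2.card)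
      = ∑ k ∈ Finset.range (n+1), ((-1 : ℤ)^k *
          (Fintype.card (AkT n k) : ℤ)) := by
    rw [← Finset.sum_fiberwise_of_maps_to (g := fun p => p.2.card)
      (t := Finset.range (n+1)) (fun p _ => Finset.mem_range.mpr
        (by
          have := Finset.card_le_univ p.2
          simp only [Finset.card_univ, Fintype.card_fin] at this
          show p.2.card < n + 1
          omega))]
    apply Finset.sum_congr rfl
    intro k _
    rw [Finset.filter_filter]
    rw [Finset.sum_congr rfl (fun p hp => by
      rw [(Finset.mem_filter.mp hp).2.2])]
    rw [Finset.sum_const, ← card_eq_filterk n k]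
    simp [mul_comm]
  rw [hfib, Finset.sum_mul]
  have hterm : ∀ k ∈ Finset.range (n+1),
      (-1 : ℤ)^k * (Fintype.card (AkT n k) : ℤ) * ((n : ℤ)+1)^2
        = (-1 : ℤ)^k * ((n+1).choose k : ℤ) * ((n : ℤ)+1)^(n+1-k) := by
    intro k hk
    have hkn : k ≤ n := by have := Finset.mem_range.mp hk; omega
    have hc := card_eq_AkT n k hkn
    have hcz : ((n : ℤ)+1) * (Fintype.card (AkT n k) : ℤ)
        = ((n+1).choose k : ℤ) * ((n : ℤ)+1)^(n-k) := by exact_mod_cast hc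
    have hpow : ((n : ℤ)+1)^(n+1-k) = ((n : ℤ)+1)^(n-k) * ((n : ℤ)+1) := by
      rw [← pow_succ]
      congr 1
      omega
    rw [hpow]
    calc (-1 : ℤ)^k * (Fintype.card (AkT n k) : ℤ) * ((n : ℤ)+1)^2
        = (-1 : ℤ)^k * (((n : ℤ)+1) * (Fintype.card (AkT n k) : ℤ)) * ((n : ℤ)+1) := by ring
      _ = (-1 : ℤ)^k * (((n+1).choose k : ℤ) * ((n : ℤ)+1)^(n-k)) * ((n : ℤ)+1) := by rw [hcz]
      _ = (-1 : ℤ)^k * ((n+1).choose k : ℤ) * (((n : ℤ)+1)^(n-k) * ((n : ℤ)+1)) := by ring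
  rw [Finset.sum_congr rfl hterm]
  -- binomial theorem
  have hbin := add_pow (-1 : ℤ) ((n : ℤ)+1) (n+1)
  have hlhs : ((-1 : ℤ) + ((n : ℤ)+1))^(n+1) = (n : ℤ)^(n+1) := by ring_nf
  rw [hlhs] at hbin
  rw [Finset.sum_range_succ] at hbin
  have hlast : (-1 : ℤ)^(n+1) * ((n : ℤ)+1)^((n+1)-(n+1)) * ((n+1).choose (n+1) : ℤ)
      = -(-1 : ℤ)^n := by
    simp [pow_succ]
  rw [hlast] at hbin
  have hsum : ∑ k ∈ Finset.range (n+1), (-1 : ℤ)^k * ((n : ℤ)+1)^((n+1)-k) * ((n+1).choose k : ℤ)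
      = ∑ k ∈ Finset.range (n+1), (-1 : ℤ)^k * ((n+1).choose k : ℤ) * ((n : ℤ)+1)^(n+1-k) := by
    apply Finset.sum_congr rfl
    intro k _
    ring
  rw [hsum] at hbin
  omega

end Main

lemma set_eq (n : ℕ) :
    {π : Fin n → ℕ | IsParkingFunction n π ∧ ∀ i : Fin n, π i ≠ (i : ℕ) + 1}
      = ↑((PFinset n).image (fun w => fun i => (w i).val)) := by
  ext π
  simp only [Set.mem_setOf_eq, Finset.coe_image, Set.mem_image, Finset.mem_coe]
  constructor
  · rintro ⟨hpf, hnf⟩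
    have hN : NPark n π := (isParkingFunction_iff_NPark n π).mp hpf
    have hle : ∀ i, π i ≤ n := NPark_le n π hN
    have hval : ∀ i, (((π i : ℕ) : ZMod (n+1))).val = π i := fun i =>
      ZMod.val_cast_of_lt (by have := hle i; omega)
    have hfun : (fun i => (((π i : ℕ) : ZMod (n+1))).val) = π := funext hval
    refine ⟨fun i => ((π i : ℕ) : ZMod (n+1)), ?_, hfun⟩
    refine Finset.mem_filter.mpr ⟨Finset.mem_univ _, ?_, ?_⟩
    · rw [← NPark_val_iff]
      rw [hfun]
      exact hN
    · rw [← nofix_iff]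
      intro i
      rw [hval i]
      exact hnf i
  · rintro ⟨w, hw, rfl⟩
    obtain ⟨-, hP, hnf⟩ := Finset.mem_filter.mp hw
    have hN : NPark n (fun i => (w i).val) := (NPark_val_iff n w).mpr hP
    exact ⟨(isParkingFunction_iff_NPark n _).mpr hN, (nofix_iff n w).mpr hnf⟩

theorem main_final (n : ℕ) :
    (Set.ncard {π : Fin n → ℕ | IsParkingFunction n π ∧
        ∀ i : Fin n, π i ≠ (i : ℕ) + 1} : ℚ) =
      ((n : ℚ) ^ (n + 1) + (-1 : ℚ) ^ n) / ((n : ℚ) + 1) ^ 2 := by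
  rw [set_eq n, Set.ncard_coe_finset,
    Finset.card_image_of_injective _ (val_comp_injective n)]
  have h := main_count n
  have hne : ((n : ℚ) + 1) ^ 2 ≠ 0 := by positivity
  rw [eq_div_iff hne]
  exact_mod_cast h


end PFAux


/-- The number of parking functions of length `n` with no fixed points is
`(n^(n+1) + (-1)^n)/(n+1)^2`. -/
theorem card_parkingFunctions_noFixedPoints (n : ℕ) :
    (Set.ncard {π : Fin n → ℕ | IsParkingFunction n π ∧
        ∀ i : Fin n, π i ≠ (i : ℕ) + 1} : ℚ) =
      ((n : ℚ) ^ (n + 1) + (-1 : ℚ) ^ n) / ((n : ℚ) + 1) ^ 2 := by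
  exact PFAux.main_final n
end
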